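/- arXiv:2309.01400 — 2 statements merged into one kernel-verified Lean document; each statement's English description precedes it below -/
import Mathlib

section
/- Suppose τ ∈ C¹([0,1]) satisfies C₁⁻¹ s ≤ τ(s) ≤ C₁ s and |τ'(s)| ≤ C₁ for all s ∈ [0,1], for some C₁ ≥ 1. Then there exists C ≥ 1 depending only on C₁ such that for every x ∈ C²([0,1]; ℝ³) with s x'' ∈ L² and x' ∈ L²: C⁻¹(‖s x''‖_{L²} + ‖x'‖_{L²}) ≤ ‖(τ x')'‖_{L²} ≤ C(‖s x''‖_{L²} + ‖x'‖_{L²}). -/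
open MeasureTheory

/-- Auxiliary: if `a ≤ b + ε * K` for all `ε ∈ (0,1]` with `0 ≤ K`, then `a ≤ b`. -/
private lemma aux_eps_le {a b K : ℝ} (hK : 0 ≤ K)
    (h : ∀ ε ∈ Set.Ioc (0:ℝ) 1, a ≤ b + ε * K) : a ≤ b := by
  refine le_of_forall_pos_le_add fun δ hδ => ?_
  have hε1 : (0:ℝ) < min 1 (δ / (K + 1)) := lt_min one_pos (by positivity)
  have := h (min 1 (δ / (K + 1))) ⟨hε1, min_le_left _ _⟩
  have h2 : min 1 (δ / (K + 1)) * K ≤ δ := by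
    calc min 1 (δ / (K + 1)) * K ≤ (δ / (K + 1)) * K := by
          apply mul_le_mul_of_nonneg_right (min_le_right _ _) hK
      _ ≤ δ := by
          rw [div_mul_eq_mul_div, div_le_iff₀ (by linarith)]
          nlinarith
  linarith

set_option maxHeartbeats 2000000 in
/-- Norm equivalence for the degenerate elliptic operator `A_τ x = -(τ x')'` under
the stability condition `C₁⁻¹ s ≤ τ(s) ≤ C₁ s`, `|τ'| ≤ C₁`: there is `C = C(C₁) ≥ 1`
with `C⁻¹(‖s x''‖_{L²} + ‖x'‖_{L²}) ≤ ‖(τ x')'‖_{L²} ≤ C(‖s x''‖_{L²} + ‖x'‖_{L²})`. -/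
theorem stmt_18 (C₁ : ℝ) (hC₁ : 1 ≤ C₁) :
    ∃ C ≥ (1:ℝ), ∀ (τ τ' : ℝ → ℝ) (x x' x'' : ℝ → EuclideanSpace ℝ (Fin 3)),
      (∀ s ∈ Set.Icc (0:ℝ) 1, HasDerivWithinAt τ (τ' s) (Set.Icc 0 1) s) →
      ContinuousOn τ' (Set.Icc 0 1) →
      (∀ s ∈ Set.Icc (0:ℝ) 1, C₁⁻¹ * s ≤ τ s ∧ τ s ≤ C₁ * s ∧ |τ' s| ≤ C₁) →
      (∀ s ∈ Set.Icc (0:ℝ) 1, HasDerivWithinAt x (x' s) (Set.Icc 0 1) s) →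
      (∀ s ∈ Set.Icc (0:ℝ) 1, HasDerivWithinAt x' (x'' s) (Set.Icc 0 1) s) →
      ContinuousOn x'' (Set.Icc 0 1) →
      C⁻¹ * ((∫ s in (0:ℝ)..1, (s * ‖x'' s‖) ^ 2) ^ ((1:ℝ) / 2) +
          (∫ s in (0:ℝ)..1, ‖x' s‖ ^ 2) ^ ((1:ℝ) / 2))
        ≤ (∫ s in (0:ℝ)..1, ‖τ' s • x' s + τ s • x'' s‖ ^ 2) ^ ((1:ℝ) / 2) ∧
      (∫ s in (0:ℝ)..1, ‖τ' s • x' s + τ s • x'' s‖ ^ 2) ^ ((1:ℝ) / 2)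
        ≤ C * ((∫ s in (0:ℝ)..1, (s * ‖x'' s‖) ^ 2) ^ ((1:ℝ) / 2) +
          (∫ s in (0:ℝ)..1, ‖x' s‖ ^ 2) ^ ((1:ℝ) / 2)) := by
  classical
  have hC₁0 : (0:ℝ) < C₁ := lt_of_lt_of_le one_pos hC₁
  have hC₁3 : (1:ℝ) ≤ C₁ ^ 3 := one_le_pow₀ hC₁
  refine ⟨6 * C₁ ^ 3, by nlinarith, ?_⟩
  intro τ τ' x x' x'' hτd hτ'c hb hxd hx'd hx''c
  -- basic continuity
  have hτc : ContinuousOn τ (Set.Icc 0 1) := fun s hs => (hτd s hs).continuousWithinAt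
  have hx'c : ContinuousOn x' (Set.Icc 0 1) := fun s hs => (hx'd s hs).continuousWithinAt
  set f : ℝ → EuclideanSpace ℝ (Fin 3) := fun s => τ' s • x' s + τ s • x'' s with hfdef
  have hfc : ContinuousOn f (Set.Icc 0 1) := (hτ'c.smul hx'c).add (hτc.smul hx''c)
  have hτ0 : τ 0 = 0 := by
    have h1 := (hb 0 ⟨le_refl 0, zero_le_one⟩).1
    have h2 := (hb 0 ⟨le_refl 0, zero_le_one⟩).2.1
    simp only [mul_zero] at h1 h2
    linarith
  have hτnn : ∀ s ∈ Set.Icc (0:ℝ) 1, 0 ≤ τ s := fun s hs =>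
    le_trans (by have := hs.1; positivity) (hb s hs).1
  have hsleτ : ∀ s ∈ Set.Icc (0:ℝ) 1, s ≤ C₁ * τ s := fun s hs => by
    have h1 := (hb s hs).1
    calc s = C₁ * (C₁⁻¹ * s) := by field_simp
      _ ≤ C₁ * τ s := by nlinarith
  -- G = τ • x'
  set G : ℝ → EuclideanSpace ℝ (Fin 3) := fun s => τ s • x' s with hGdef
  have hGc : ContinuousOn G (Set.Icc 0 1) := hτc.smul hx'c
  have hGnorm : ∀ s ∈ Set.Icc (0:ℝ) 1, ‖G s‖ = τ s * ‖x' s‖ := fun s hs => by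
    rw [hGdef, norm_smul, Real.norm_eq_abs, abs_of_nonneg (hτnn s hs)]
  have hGd : ∀ s ∈ Set.Ioo (0:ℝ) 1, HasDerivAt G (f s) s := by
    intro s hs
    have hmem : Set.Icc (0:ℝ) 1 ∈ nhds s := Icc_mem_nhds hs.1 hs.2
    have := ((hτd s (Set.Ioo_subset_Icc_self hs)).hasDerivAt hmem).smul
      ((hx'd s (Set.Ioo_subset_Icc_self hs)).hasDerivAt hmem)
    rw [show f s = τ s • x'' s + τ' s • x' s from add_comm _ _]
    exact this
  -- FTC : G s = ∫₀ˢ f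
  have hF : ∀ s ∈ Set.Icc (0:ℝ) 1, (∫ σ in (0:ℝ)..s, f σ) = G s := by
    intro s hs
    have h := intervalIntegral.integral_eq_sub_of_hasDeriv_right_of_le hs.1
      (hGc.mono (Set.Icc_subset_Icc le_rfl hs.2))
      (fun σ hσ => ((hGd σ ⟨hσ.1, lt_of_lt_of_le hσ.2 hs.2⟩).hasDerivWithinAt))
      ((hfc.mono (by rw [Set.uIcc_of_le hs.1]; exact Set.Icc_subset_Icc le_rfl hs.2)).intervalIntegrable)
    rw [h, hGdef]; simp [hτ0]
  -- bound on f
  obtain ⟨M₀, hM₀⟩ := isCompact_Icc.exists_bound_of_continuousOn hfc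
  set M := max M₀ 0 with hMdef
  have hM : ∀ s ∈ Set.Icc (0:ℝ) 1, ‖f s‖ ≤ M := fun s hs => le_trans (hM₀ s hs) (le_max_left _ _)
  have hMnn : 0 ≤ M := le_max_right _ _
  have hGle : ∀ s ∈ Set.Icc (0:ℝ) 1, ‖G s‖ ≤ M * s := by
    intro s hs
    rw [← hF s hs]
    have := intervalIntegral.norm_integral_le_of_norm_le_const (a := 0) (b := s) (C := M) (f := f)
      (fun σ hσ => by
        rw [Set.uIoc_of_le hs.1] at hσ
        exact hM σ ⟨le_of_lt hσ.1, le_trans hσ.2 hs.2⟩)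
    simpa [abs_of_nonneg hs.1] using this
  -- pointwise bounds
  have hx'le : ∀ s ∈ Set.Icc (0:ℝ) 1, s * ‖x' s‖ ≤ C₁ * ‖G s‖ := fun s hs => by
    rw [hGnorm s hs]
    have h1 := hsleτ s hs
    have h2 : (0:ℝ) ≤ ‖x' s‖ := norm_nonneg _
    nlinarith
  have hx''le : ∀ s ∈ Set.Icc (0:ℝ) 1, s * ‖x'' s‖ ≤ C₁ * (‖f s‖ + C₁ * ‖x' s‖) := by
    intro s hs
    have h1 : τ s • x'' s = f s - τ' s • x' s := by
      show τ s • x'' s = (τ' s • x' s + τ s • x'' s) - τ' s • x' s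
      rw [add_sub_cancel_left]
    have h2 : τ s * ‖x'' s‖ = ‖f s - τ' s • x' s‖ := by
      rw [← h1, norm_smul, Real.norm_eq_abs, abs_of_nonneg (hτnn s hs)]
    have h3 : ‖f s - τ' s • x' s‖ ≤ ‖f s‖ + C₁ * ‖x' s‖ := by
      refine le_trans (norm_sub_le _ _) ?_
      have : ‖τ' s • x' s‖ = |τ' s| * ‖x' s‖ := by rw [norm_smul, Real.norm_eq_abs]
      have h4 := (hb s hs).2.2
      have h5 : (0:ℝ) ≤ ‖x' s‖ := norm_nonneg _
      nlinarith
    have h6 := hsleτ s hs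
    have h7 : (0:ℝ) ≤ ‖x'' s‖ := norm_nonneg _
    nlinarith [mul_le_mul_of_nonneg_left (h2 ▸ h3 : τ s * ‖x'' s‖ ≤ ‖f s‖ + C₁ * ‖x' s‖) (le_of_lt hC₁0)]
  have hfle : ∀ s ∈ Set.Icc (0:ℝ) 1, ‖f s‖ ≤ C₁ * ‖x' s‖ + C₁ * (s * ‖x'' s‖) := by
    intro s hs
    refine le_trans (norm_add_le _ _) ?_
    rw [norm_smul, norm_smul, Real.norm_eq_abs, Real.norm_eq_abs, abs_of_nonneg (hτnn s hs)]
    have h1 := (hb s hs).2.1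
    have h2 := (hb s hs).2.2
    have h3 : (0:ℝ) ≤ ‖x' s‖ := norm_nonneg _
    have h4 : (0:ℝ) ≤ ‖x'' s‖ := norm_nonneg _
    nlinarith
  -- integrability helpers
  have hsub : ∀ {a b : ℝ}, 0 ≤ a → b ≤ 1 → Set.Icc a b ⊆ Set.Icc (0:ℝ) 1 :=
    fun ha hb => Set.Icc_subset_Icc ha hb
  have hint : ∀ {a b : ℝ} (g : ℝ → ℝ), 0 ≤ a → a ≤ b → b ≤ 1 →
      ContinuousOn g (Set.Icc 0 1) → IntervalIntegrable g volume a b := by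
    intro a b g ha hab hb hg
    exact ((hg.mono (hsub ha hb)).mono (by rw [Set.uIcc_of_le hab])).intervalIntegrable
  -- continuity of the integrands
  have cA : ContinuousOn (fun s => (s * ‖x'' s‖) ^ 2) (Set.Icc (0:ℝ) 1) :=
    ((continuousOn_id.mul hx''c.norm).pow 2)
  have cB : ContinuousOn (fun s => ‖x' s‖ ^ 2) (Set.Icc (0:ℝ) 1) := hx'c.norm.pow 2
  have cN : ContinuousOn (fun s => ‖f s‖ ^ 2) (Set.Icc (0:ℝ) 1) := hfc.norm.pow 2
  set IA := ∫ s in (0:ℝ)..1, (s * ‖x'' s‖) ^ 2 with hIAdef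
  set IB := ∫ s in (0:ℝ)..1, ‖x' s‖ ^ 2 with hIBdef
  set IN := ∫ s in (0:ℝ)..1, ‖f s‖ ^ 2 with hINdef
  have hIA0 : 0 ≤ IA := intervalIntegral.integral_nonneg zero_le_one (fun u _ => sq_nonneg _)
  have hIB0 : 0 ≤ IB := intervalIntegral.integral_nonneg zero_le_one (fun u _ => sq_nonneg _)
  have hIN0 : 0 ≤ IN := intervalIntegral.integral_nonneg zero_le_one (fun u _ => sq_nonneg _)
  -- upper bound for IN
  have hINle : IN ≤ 2 * C₁ ^ 2 * IB + 2 * C₁ ^ 2 * IA := by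
    have h1 : IN ≤ ∫ s in (0:ℝ)..1, (2 * C₁ ^ 2 * ‖x' s‖ ^ 2 + 2 * C₁ ^ 2 * (s * ‖x'' s‖) ^ 2) := by
      refine intervalIntegral.integral_mono_on zero_le_one
        (hint _ le_rfl zero_le_one le_rfl cN)
        (hint _ le_rfl zero_le_one le_rfl
          ((continuousOn_const.mul cB).add (continuousOn_const.mul cA))) ?_
      intro s hs
      have h2 := hfle s hs
      have h3 : (0:ℝ) ≤ ‖f s‖ := norm_nonneg _
      have h4 : (0:ℝ) ≤ ‖x' s‖ := norm_nonneg _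
      have h5 : (0:ℝ) ≤ s * ‖x'' s‖ := mul_nonneg hs.1 (norm_nonneg _)
      nlinarith [sq_nonneg (‖x' s‖ - s * ‖x'' s‖)]
    rwa [intervalIntegral.integral_add
        (hint (fun s => 2 * C₁ ^ 2 * ‖x' s‖ ^ 2) le_rfl zero_le_one le_rfl (continuousOn_const.mul cB))
        (hint (fun s => 2 * C₁ ^ 2 * (s * ‖x'' s‖) ^ 2) le_rfl zero_le_one le_rfl (continuousOn_const.mul cA)),
      intervalIntegral.integral_const_mul, intervalIntegral.integral_const_mul] at h1
  -- bound for IA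
  have hIAle : IA ≤ 2 * C₁ ^ 2 * IN + 2 * C₁ ^ 4 * IB := by
    have h1 : IA ≤ ∫ s in (0:ℝ)..1, (2 * C₁ ^ 2 * ‖f s‖ ^ 2 + 2 * C₁ ^ 4 * ‖x' s‖ ^ 2) := by
      refine intervalIntegral.integral_mono_on zero_le_one
        (hint _ le_rfl zero_le_one le_rfl cA)
        (hint _ le_rfl zero_le_one le_rfl
          ((continuousOn_const.mul cN).add (continuousOn_const.mul cB))) ?_
      intro s hs
      have h2 := hx''le s hs
      have h3 : (0:ℝ) ≤ ‖f s‖ := norm_nonneg _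
      have h4 : (0:ℝ) ≤ ‖x' s‖ := norm_nonneg _
      have h5 : (0:ℝ) ≤ s * ‖x'' s‖ := mul_nonneg hs.1 (norm_nonneg _)
      nlinarith [sq_nonneg (C₁ * (‖f s‖ - C₁ * ‖x' s‖)), sq_nonneg (‖f s‖ - C₁ * ‖x' s‖)]
    rwa [intervalIntegral.integral_add
        (hint (fun s => 2 * C₁ ^ 2 * ‖f s‖ ^ 2) le_rfl zero_le_one le_rfl (continuousOn_const.mul cN))
        (hint (fun s => 2 * C₁ ^ 4 * ‖x' s‖ ^ 2) le_rfl zero_le_one le_rfl (continuousOn_const.mul cB)),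
      intervalIntegral.integral_const_mul, intervalIntegral.integral_const_mul] at h1
  -- Hardy inequality : IB ≤ 4 C₁² IN
  obtain ⟨M₁, hM₁⟩ := isCompact_Icc.exists_bound_of_continuousOn hx'c
  set M' := max M₁ 0 with hM'def
  have hM' : ∀ s ∈ Set.Icc (0:ℝ) 1, ‖x' s‖ ≤ M' := fun s hs => le_trans (hM₁ s hs) (le_max_left _ _)
  have hM'nn : 0 ≤ M' := le_max_right _ _
  set H : ℝ → ℝ := fun s => (inner ℝ (G s) (G s) : ℝ) / s with hHdef
  set D : ℝ → ℝ := fun s => (2 * (inner ℝ (f s) (G s) : ℝ) * s - (inner ℝ (G s) (G s) : ℝ)) / s ^ 2 with hDdef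
  set q : ℝ → ℝ := fun s => (‖G s‖ / s) ^ 2 with hqdef
  have hHd : ∀ s ∈ Set.Ioo (0:ℝ) 1, HasDerivAt H (D s) s := by
    intro s hs
    have h1 : HasDerivAt (fun t => (inner ℝ (G t) (G t) : ℝ))
        ((inner ℝ (G s) (f s) : ℝ) + (inner ℝ (f s) (G s) : ℝ)) s :=
      (hGd s hs).inner ℝ (hGd s hs)
    have h2 := h1.div (hasDerivAt_id s) (ne_of_gt hs.1)
    refine h2.congr_deriv ?_
    rw [hDdef]
    simp only [real_inner_comm (G s) (f s), id_eq]
    ring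
  have hIBle : IB ≤ 4 * C₁ ^ 2 * IN := by
    refine aux_eps_le (a := IB) (b := 4 * C₁ ^ 2 * IN) (K := M' ^ 2 + 2 * C₁ ^ 2 * M ^ 2)
      (by positivity) ?_
    intro ε hε
    obtain ⟨hε0, hε1⟩ := hε
    have hsub' : Set.Icc ε 1 ⊆ Set.Icc (0:ℝ) 1 := hsub hε0.le le_rfl
    have hne : ∀ s ∈ Set.Icc ε 1, s ≠ 0 := fun s hs => ne_of_gt (lt_of_lt_of_le hε0 hs.1)
    -- FTC for H on [ε,1]
    have hHc : ContinuousOn H (Set.Icc ε 1) :=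
      ((hGc.mono hsub').inner (hGc.mono hsub')).div continuousOn_id hne
    have hDc : ContinuousOn D (Set.Icc ε 1) :=
      (((continuousOn_const.mul ((hfc.mono hsub').inner (hGc.mono hsub'))).mul
        continuousOn_id).sub ((hGc.mono hsub').inner (hGc.mono hsub'))).div
        (continuousOn_id.pow 2) (fun s hs => pow_ne_zero 2 (hne s hs))
    have hqc : ContinuousOn q (Set.Icc ε 1) :=
      (((hGc.mono hsub').norm).div continuousOn_id hne).pow 2
    have hDint : IntervalIntegrable D volume ε 1 :=
      (hDc.mono (by rw [Set.uIcc_of_le hε1])).intervalIntegrable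
    have hqint : IntervalIntegrable q volume ε 1 :=
      (hqc.mono (by rw [Set.uIcc_of_le hε1])).intervalIntegrable
    have hFTC : ∫ s in ε..1, D s = H 1 - H ε :=
      intervalIntegral.integral_eq_sub_of_hasDeriv_right_of_le hε1 hHc
        (fun s hs => ((hHd s ⟨lt_trans hε0 hs.1, hs.2⟩).hasDerivWithinAt)) hDint
    -- q = 2⟪f,G⟫/s - D on [ε,1]
    have hqD : Set.EqOn q (fun s => 2 * (inner ℝ (f s) (G s) : ℝ) / s - D s) (Set.uIcc ε 1) := by
      rw [Set.uIcc_of_le hε1]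
      intro s hs
      have hs0 : s ≠ 0 := hne s hs
      simp only [hqdef, hDdef, real_inner_self_eq_norm_sq]
      field_simp
      ring
    have hipc : ContinuousOn (fun s => 2 * (inner ℝ (f s) (G s) : ℝ) / s) (Set.Icc ε 1) :=
      (continuousOn_const.mul ((hfc.mono hsub').inner (hGc.mono hsub'))).div
        continuousOn_id hne
    have hipint : IntervalIntegrable (fun s => 2 * (inner ℝ (f s) (G s) : ℝ) / s) volume ε 1 :=
      (hipc.mono (by rw [Set.uIcc_of_le hε1])).intervalIntegrable
    have hq_eq : ∫ s in ε..1, q s = (∫ s in ε..1, 2 * (inner ℝ (f s) (G s) : ℝ) / s) - (H 1 - H ε) := by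
      rw [intervalIntegral.integral_congr hqD, intervalIntegral.integral_sub hipint hDint, hFTC]
    -- pointwise bound for the cross term
    have hcross : ∀ s ∈ Set.Icc ε 1, 2 * (inner ℝ (f s) (G s) : ℝ) / s ≤ 2 * ‖f s‖ ^ 2 + (1/2) * q s := by
      intro s hs
      have hs0 : 0 < s := lt_of_lt_of_le hε0 hs.1
      have h1 : (inner ℝ (f s) (G s) : ℝ) ≤ ‖f s‖ * ‖G s‖ := real_inner_le_norm _ _
      have h2 : 2 * (inner ℝ (f s) (G s) : ℝ) / s ≤ 2 * (‖f s‖ * ‖G s‖) / s := by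
        gcongr
      have h3 : 2 * (‖f s‖ * ‖G s‖) / s = 2 * ‖f s‖ * (‖G s‖ / s) := by ring
      have h4 : q s = (‖G s‖ / s) ^ 2 := rfl
      have ht : (0:ℝ) ≤ ‖G s‖ / s := div_nonneg (norm_nonneg _) hs0.le
      rw [h4]
      nlinarith [sq_nonneg (2 * ‖f s‖ - ‖G s‖ / s)]
    -- integrate the bound
    have hfint' : IntervalIntegrable (fun s => ‖f s‖ ^ 2) volume ε 1 := hint _ hε0.le hε1 le_rfl cN
    have hrhsint : IntervalIntegrable (fun s => 2 * ‖f s‖ ^ 2 + (1/2) * q s) volume ε 1 :=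
      (((continuousOn_const.mul (cN.mono hsub')).add (continuousOn_const.mul hqc)).mono
        (by rw [Set.uIcc_of_le hε1])).intervalIntegrable
    have h5 : (∫ s in ε..1, 2 * (inner ℝ (f s) (G s) : ℝ) / s)
        ≤ ∫ s in ε..1, (2 * ‖f s‖ ^ 2 + (1/2) * q s) :=
      intervalIntegral.integral_mono_on hε1 hipint hrhsint hcross
    have h6 : (∫ s in ε..1, (2 * ‖f s‖ ^ 2 + (1/2) * q s))
        = 2 * (∫ s in ε..1, ‖f s‖ ^ 2) + (1/2) * ∫ s in ε..1, q s := by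
      rw [intervalIntegral.integral_add (hfint'.const_mul 2) (hqint.const_mul (1/2)),
        intervalIntegral.integral_const_mul, intervalIntegral.integral_const_mul]
    have hH1 : 0 ≤ H 1 := div_nonneg real_inner_self_nonneg zero_le_one
    have hHε : H ε ≤ M ^ 2 * ε := by
      have h7 : H ε = ‖G ε‖ ^ 2 / ε := by
        simp only [hHdef, real_inner_self_eq_norm_sq]
      rw [h7, div_le_iff₀ hε0]
      have h8 := hGle ε ⟨hε0.le, hε1⟩
      nlinarith [norm_nonneg (G ε)]
    have hq4 : (∫ s in ε..1, q s) ≤ 4 * (∫ s in ε..1, ‖f s‖ ^ 2) + 2 * H ε := by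
      rw [h6] at h5
      linarith [hq_eq, h5, hH1]
    have hfpart : (∫ s in ε..1, ‖f s‖ ^ 2) ≤ IN := by
      have hadd := intervalIntegral.integral_add_adjacent_intervals
        (hint _ le_rfl hε0.le hε1 cN) hfint'
      have h0ε : 0 ≤ ∫ s in (0:ℝ)..ε, ‖f s‖ ^ 2 :=
        intervalIntegral.integral_nonneg hε0.le (fun u _ => sq_nonneg _)
      rw [hINdef]; linarith
    have hx'q : (∫ s in ε..1, ‖x' s‖ ^ 2) ≤ C₁ ^ 2 * ∫ s in ε..1, q s := by
      rw [← intervalIntegral.integral_const_mul]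
      refine intervalIntegral.integral_mono_on hε1 (hint _ hε0.le hε1 le_rfl cB)
        (((continuousOn_const.mul hqc).mono (by rw [Set.uIcc_of_le hε1])).intervalIntegrable) ?_
      intro s hs
      have hs0 : (0:ℝ) < s := lt_of_lt_of_le hε0 hs.1
      have h7 := hx'le s (hsub' hs)
      have h8 : ‖x' s‖ ≤ C₁ * ‖G s‖ / s := by
        rw [le_div_iff₀ hs0, mul_comm]
        exact h7
      calc ‖x' s‖ ^ 2 ≤ (C₁ * ‖G s‖ / s) ^ 2 := pow_le_pow_left₀ (norm_nonneg _) h8 2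
        _ = C₁ ^ 2 * q s := by rw [hqdef, mul_div_assoc, mul_pow]
    have hsplit := intervalIntegral.integral_add_adjacent_intervals
      (hint (fun s => ‖x' s‖ ^ 2) le_rfl hε0.le hε1 cB) (hint _ hε0.le hε1 le_rfl cB)
    have hIB0ε : (∫ s in (0:ℝ)..ε, ‖x' s‖ ^ 2) ≤ ε * M' ^ 2 := by
      have h9 : (∫ s in (0:ℝ)..ε, ‖x' s‖ ^ 2) ≤ ∫ s in (0:ℝ)..ε, M' ^ 2 :=
        intervalIntegral.integral_mono_on hε0.le (hint _ le_rfl hε0.le hε1 cB)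
          intervalIntegrable_const
          (fun s hs => by
            have := hM' s ⟨hs.1, le_trans hs.2 hε1⟩
            nlinarith [norm_nonneg (x' s)])
      simpa [smul_eq_mul] using h9
    have hchain : (∫ s in ε..1, ‖x' s‖ ^ 2) ≤ C₁ ^ 2 * (4 * IN + 2 * (M ^ 2 * ε)) := by
      refine le_trans hx'q ?_
      have h10 : (∫ s in ε..1, q s) ≤ 4 * IN + 2 * (M ^ 2 * ε) := by linarith [hq4, hfpart, hHε]
      nlinarith [sq_nonneg C₁]
    have : IB ≤ 4 * C₁ ^ 2 * IN + ε * (M' ^ 2 + 2 * C₁ ^ 2 * M ^ 2) := by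
      rw [hIBdef, ← hsplit]
      nlinarith [hIB0ε, hchain]
    exact this
  -- consequence : IA ≤ 16 C₁⁶ IN
  have hp26 : C₁ ^ 2 ≤ C₁ ^ 6 := pow_le_pow_right₀ hC₁ (by norm_num)
  have hIAle2 : IA ≤ 16 * C₁ ^ 6 * IN := by
    nlinarith [mul_le_mul_of_nonneg_left hIBle (by positivity : (0:ℝ) ≤ 2 * C₁ ^ 4),
      mul_le_mul_of_nonneg_right hp26 hIN0]
  -- final assembly
  have hgoalN : (∫ s in (0:ℝ)..1, ‖τ' s • x' s + τ s • x'' s‖ ^ 2) = IN := rfl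
  simp only [hgoalN, ← Real.sqrt_eq_rpow]
  have hA : Real.sqrt IA ≤ 4 * C₁ ^ 3 * Real.sqrt IN := by
    have h1 : IA ≤ (4 * C₁ ^ 3) ^ 2 * IN := by nlinarith
    calc Real.sqrt IA ≤ Real.sqrt ((4 * C₁ ^ 3) ^ 2 * IN) := Real.sqrt_le_sqrt h1
      _ = 4 * C₁ ^ 3 * Real.sqrt IN := by
          rw [Real.sqrt_mul (sq_nonneg _), Real.sqrt_sq (by positivity)]
  have hB : Real.sqrt IB ≤ 2 * C₁ * Real.sqrt IN := by
    have h1 : IB ≤ (2 * C₁) ^ 2 * IN := by nlinarith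
    calc Real.sqrt IB ≤ Real.sqrt ((2 * C₁) ^ 2 * IN) := Real.sqrt_le_sqrt h1
      _ = 2 * C₁ * Real.sqrt IN := by
          rw [Real.sqrt_mul (sq_nonneg _), Real.sqrt_sq (by positivity)]
  have h2C : 2 * C₁ ≤ 2 * C₁ ^ 3 := by nlinarith
  have hsN : 0 ≤ Real.sqrt IN := Real.sqrt_nonneg _
  have hsA : 0 ≤ Real.sqrt IA := Real.sqrt_nonneg _
  have hsB : 0 ≤ Real.sqrt IB := Real.sqrt_nonneg _
  constructor
  · rw [inv_mul_le_iff₀ (by positivity)]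
    nlinarith [hA, hB, h2C, hsN]
  · have h1 : IN ≤ (2 * C₁ * (Real.sqrt IA + Real.sqrt IB)) ^ 2 := by
      nlinarith [hINle, Real.sq_sqrt hIA0, Real.sq_sqrt hIB0,
        mul_nonneg hsA hsB, sq_nonneg C₁, mul_nonneg (mul_nonneg (sq_nonneg C₁) hsA) hsB]
    calc Real.sqrt IN ≤ Real.sqrt ((2 * C₁ * (Real.sqrt IA + Real.sqrt IB)) ^ 2) :=
          Real.sqrt_le_sqrt h1
      _ = 2 * C₁ * (Real.sqrt IA + Real.sqrt IB) := Real.sqrt_sq (by positivity)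
      _ ≤ 6 * C₁ ^ 3 * (Real.sqrt IA + Real.sqrt IB) := by nlinarith [h2C, hsA, hsB]
end

section
/- Let g = 0, and let (x, τ) be a solution on (0,1)×(0,T) of ẍ = (τ x')', |x'| = 1, with x(1,t)=0, τ(0,t)=0, where τ solves the associated two-point boundary value problem −τ'' + |x''|²τ = |ẋ'|², τ(0)=0, τ'(1)=0 at each time. If inf_{(s,t)} τ(s,t)/s ≤ 0, then ẋ ≡ 0, x(s,t) ≡ x(s,0), and τ ≡ 0. -/
open MeasureTheory Set intervalIntegral
open scoped RealInnerProductSpace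
noncomputable section
namespace Str19



variable {E : Type*} [NormedAddCommGroup E] [NormedSpace ℝ E]

/-- clamp to `[0,c]` -/
def pj (c r : ℝ) : ℝ := max 0 (min r c)

lemma pj_mem {c : ℝ} (hc : 0 ≤ c) (r : ℝ) : pj c r ∈ Icc 0 c :=
  ⟨le_max_left _ _, max_le (by exact hc) (min_le_right _ _)⟩

lemma pj_eq {c r : ℝ} (h : r ∈ Icc 0 c) : pj c r = r := by
  simp [pj, min_eq_left h.2, max_eq_right h.1]

lemma continuous_pj (c : ℝ) : Continuous (pj c) :=
  continuous_const.max (continuous_id.min continuous_const)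

lemma hdw_unique {f : ℝ → E} {v w : E} {s : Set ℝ} {x : ℝ}
    (h1 : HasDerivWithinAt f v s x) (h2 : HasDerivWithinAt f w s x)
    (hs : UniqueDiffWithinAt ℝ s x) : v = w := by
  rw [← h1.derivWithin hs, ← h2.derivWithin hs]

lemma antitoneOn_aux {u u' : ℝ → ℝ} {a b : ℝ}
    (hc : ContinuousOn u (Icc a b))
    (hd : ∀ x ∈ Ioo a b, HasDerivAt u (u' x) x)
    (h0 : ∀ x ∈ Ioo a b, u' x ≤ 0) : AntitoneOn u (Icc a b) := by
  apply antitoneOn_of_deriv_nonpos (convex_Icc a b) hc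
  · intro x hx
    rw [interior_Icc] at hx
    exact ((hd x hx).differentiableAt).differentiableWithinAt
  · intro x hx
    rw [interior_Icc] at hx
    rw [(hd x hx).deriv]
    exact h0 x hx

lemma monotoneOn_aux {u u' : ℝ → ℝ} {a b : ℝ}
    (hc : ContinuousOn u (Icc a b))
    (hd : ∀ x ∈ Ioo a b, HasDerivAt u (u' x) x)
    (h0 : ∀ x ∈ Ioo a b, 0 ≤ u' x) : MonotoneOn u (Icc a b) := by
  apply monotoneOn_of_deriv_nonneg (convex_Icc a b) hc
  · intro x hx
    rw [interior_Icc] at hx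
    exact ((hd x hx).differentiableAt).differentiableWithinAt
  · intro x hx
    rw [interior_Icc] at hx
    rw [(hd x hx).deriv]
    exact h0 x hx

lemma constOn_aux {u : ℝ → ℝ} {u' : ℝ → ℝ} {a b : ℝ}
    (hc : ContinuousOn u (Icc a b))
    (hd : ∀ x ∈ Ioo a b, HasDerivAt u (u' x) x)
    (h0 : ∀ x ∈ Ioo a b, u' x = 0) : ∀ x ∈ Icc a b, ∀ y ∈ Icc a b, u x = u y := by
  intro x hx y hy
  rcases le_total x y with h | h
  · exact le_antisymm
      ((monotoneOn_aux hc hd (fun z hz => (h0 z hz).ge)) hx hy h)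
      ((antitoneOn_aux hc hd (fun z hz => (h0 z hz).le)) hx hy h)
  · exact (le_antisymm
      ((monotoneOn_aux hc hd (fun z hz => (h0 z hz).ge)) hy hx h)
      ((antitoneOn_aux hc hd (fun z hz => (h0 z hz).le)) hy hx h)).symm

/-- a continuous nonneg function on `[0,1]` with zero integral vanishes -/
lemma zero_of_integral_zero {f : ℝ → ℝ} (hf : Continuous f)
    (h0 : ∀ y ∈ Icc (0:ℝ) 1, 0 ≤ f y)
    (hI : ∫ y in (0:ℝ)..1, f y = 0) : ∀ y ∈ Icc (0:ℝ) 1, f y = 0 := by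
  have hae : f =ᵐ[volume.restrict (Ioc (0:ℝ) 1)] 0 := by
    refine (integral_eq_zero_iff_of_le_of_nonneg_ae zero_le_one ?_ ?_).1 hI
    · filter_upwards [ae_restrict_mem measurableSet_Ioc] with y hy
      exact h0 y (Ioc_subset_Icc_self hy)
    · exact (hf.intervalIntegrable 0 1)
  -- f vanishes on Ioo 0 1
  have hIoo : ∀ y ∈ Ioo (0:ℝ) 1, f y = 0 := by
    intro y hy
    by_contra hne
    have hpos : 0 < f y := lt_of_le_of_ne (h0 y (Ioo_subset_Icc_self hy)) (Ne.symm hne)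
    have hopen : IsOpen {z | 0 < f z} := isOpen_lt continuous_const hf
    obtain ⟨ε, hε, hball⟩ := Metric.isOpen_iff.1 (hopen.inter isOpen_Ioo) y ⟨hpos, hy⟩
    have hsub : Metric.ball y ε ⊆ {z | f z ≠ 0} ∩ Ioc 0 1 := by
      intro z hz
      obtain ⟨h1, h2⟩ := hball hz
      exact ⟨ne_of_gt h1, Ioo_subset_Ioc_self h2⟩
    have hμ : volume (Metric.ball y ε) ≤ volume.restrict (Ioc (0:ℝ) 1) {z | f z ≠ 0} := by
      rw [Measure.restrict_apply₀']
      · exact measure_mono hsub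
      · exact measurableSet_Ioc.nullMeasurableSet
    have hz : volume.restrict (Ioc (0:ℝ) 1) {z | f z ≠ 0} = 0 := by
      have h1 : ∀ᵐ z ∂(volume.restrict (Ioc (0:ℝ) 1)), f z = 0 := hae
      exact ae_iff.mp h1
    rw [hz] at hμ
    have := Metric.measure_ball_pos volume y hε
    exact absurd (le_antisymm hμ zero_le) (ne_of_gt this)
  -- extend to the closed interval by continuity
  intro y hy
  rcases eq_or_lt_of_le hy.1 with h0' | h0'
  · have : Filter.Tendsto f (nhdsWithin 0 (Ioo (0:ℝ) 1)) (nhds (f 0)) :=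
      (hf.continuousAt.continuousWithinAt)
    have hne : (nhdsWithin (0:ℝ) (Ioo (0:ℝ) 1)).NeBot := by
      refine mem_closure_iff_nhdsWithin_neBot.1 ?_
      rw [closure_Ioo one_ne_zero.symm]
      exact ⟨le_refl 0, zero_le_one⟩
    have : Filter.Tendsto f (nhdsWithin 0 (Ioo (0:ℝ) 1)) (nhds 0) := by
      refine Filter.Tendsto.congr' ?_ tendsto_const_nhds
      filter_upwards [self_mem_nhdsWithin] with z hz using (hIoo z hz).symm
    rw [← h0'] at *
    exact tendsto_nhds_unique ((hf.continuousAt.continuousWithinAt)) this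
  rcases eq_or_lt_of_le hy.2 with h1' | h1'
  · have hne : (nhdsWithin (1:ℝ) (Ioo (0:ℝ) 1)).NeBot := by
      refine mem_closure_iff_nhdsWithin_neBot.1 ?_
      rw [closure_Ioo one_ne_zero.symm]
      exact ⟨zero_le_one, le_refl 1⟩
    have h2 : Filter.Tendsto f (nhdsWithin 1 (Ioo (0:ℝ) 1)) (nhds 0) := by
      refine Filter.Tendsto.congr' ?_ tendsto_const_nhds
      filter_upwards [self_mem_nhdsWithin] with z hz using (hIoo z hz).symm
    rw [h1']
    exact tendsto_nhds_unique ((hf.continuousAt.continuousWithinAt)) h2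
  · exact hIoo y ⟨h0', h1'⟩




lemma ftc1 {g : ℝ → ℝ} (hg : Continuous g) (a : ℝ) (s : ℝ) :
    HasDerivAt (fun z => ∫ y in a..z, g y) (g s) s :=
  intervalIntegral.integral_hasDerivAt_right (hg.intervalIntegrable _ _)
    (hg.stronglyMeasurableAtFilter _ _) hg.continuousAt

lemma ftc1' {g : ℝ → ℝ} (hg : Continuous g) (s : ℝ) :
    HasDerivAt (fun z => ∫ y in z..(1:ℝ), g y) (-(g s)) s := by
  have hfun : (fun z => ∫ y in z..(1:ℝ), g y) = fun z => -∫ y in (1:ℝ)..z, g y :=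
    funext fun z => intervalIntegral.integral_symm _ _
  rw [hfun]
  exact (ftc1 hg 1 s).neg

/-- nonnegativity of solutions of `-u'' + q u = f ≥ 0`, `u(0)=0`, `u'(1)=0`. -/
lemma bvp_nonneg {u u' q f : ℝ → ℝ}
    (hcu : Continuous u) (hcu' : Continuous u')
    (hd : ∀ s ∈ Ioo (0:ℝ) 1, HasDerivAt u (u' s) s)
    (hd' : ∀ s ∈ Ioo (0:ℝ) 1, HasDerivAt u' (q s * u s - f s) s)
    (hq : ∀ s ∈ Icc (0:ℝ) 1, 0 ≤ q s) (hf : ∀ s ∈ Icc (0:ℝ) 1, 0 ≤ f s)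
    (h0 : u 0 = 0) (h1 : u' 1 = 0) :
    ∀ s ∈ Icc (0:ℝ) 1, 0 ≤ u s := by
  by_contra hcon
  push_neg at hcon
  obtain ⟨s₀, hs₀, hneg⟩ := hcon
  set m := u s₀ with hm
  have hmneg : m < 0 := hneg
  have hs₀pos : 0 < s₀ := by
    rcases eq_or_lt_of_le hs₀.1 with h | h
    · exfalso; rw [hm, ← h, h0] at hmneg; exact lt_irrefl 0 hmneg
    · exact h
  -- find the last point `a ≤ s₀` where `u = m/2`
  have hint : ∃ z ∈ Icc 0 s₀, u z = m / 2 := by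
    have : m / 2 ∈ Icc (u s₀) (u 0) := by
      rw [h0]; constructor <;> nlinarith
    obtain ⟨z, hz, hz2⟩ := intermediate_value_Icc' hs₀pos.le hcu.continuousOn this
    exact ⟨z, hz, hz2⟩
  set A : Set ℝ := Icc 0 s₀ ∩ u ⁻¹' {m / 2} with hA
  have hAne : A.Nonempty := by
    obtain ⟨z, hz, hz2⟩ := hint; exact ⟨z, hz, by simpa using hz2⟩
  have hAcomp : IsCompact A :=
    isCompact_Icc.inter_right (isClosed_singleton.preimage hcu)
  set a := sSup A with ha
  have haA : a ∈ A := hAcomp.sSup_mem hAne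
  have hua : u a = m / 2 := by simpa using haA.2
  have haIcc : a ∈ Icc 0 s₀ := haA.1
  have halt : a < s₀ := by
    rcases eq_or_lt_of_le haIcc.2 with h | h
    · exfalso; rw [h] at hua; rw [← hm] at hua; nlinarith
    · exact h
  -- u < m/2 on (a, s₀]
  have hlt : ∀ r ∈ Ioc a s₀, u r < m / 2 := by
    intro r hr
    by_contra hge
    push_neg at hge
    have : m / 2 ∈ Icc (u s₀) (u r) := ⟨by nlinarith, hge⟩
    obtain ⟨z, hz, hz2⟩ := intermediate_value_Icc' hr.2 hcu.continuousOn this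
    have hzA : z ∈ A := ⟨⟨le_trans (le_trans haIcc.1 hr.1.le) hz.1, hz.2⟩, by simpa using hz2⟩
    have : z ≤ a := le_csSup hAcomp.bddAbove hzA
    have : r ≤ a := le_trans hz.1 this
    exact absurd this (not_le.mpr hr.1)
  -- MVT on [a, s₀]
  obtain ⟨c, hc, hslope⟩ := exists_hasDerivAt_eq_slope u u' halt
    (hcu.continuousOn)
    (fun z hz => hd z ⟨lt_of_le_of_lt haIcc.1 hz.1, lt_of_lt_of_le hz.2 hs₀.2⟩)
  have hcIoo : c ∈ Ioo (0:ℝ) 1 :=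
    ⟨lt_of_le_of_lt haIcc.1 hc.1, lt_of_lt_of_le hc.2 hs₀.2⟩
  have hu'c : u' c < 0 := by
    rw [hslope, hua, ← hm]
    apply div_neg_of_neg_of_pos
    · nlinarith
    · linarith [hc.1, hc.2, halt]
  have huc : u c < 0 := by
    have := hlt c ⟨hc.1, hc.2.le⟩
    nlinarith
  -- the trap argument on [c, 1]
  set B : Set ℝ := Icc c 1 ∩ {s | 0 ≤ u s} with hB
  have hBcomp : IsCompact B :=
    isCompact_Icc.inter_right (isClosed_le continuous_const hcu)
  rcases B.eq_empty_or_nonempty with hBe | hBne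
  · -- u < 0 on all of [c,1]; then u' is antitone there and u' 1 < 0
    have hneg' : ∀ r ∈ Icc c 1, u r < 0 := by
      intro r hr
      by_contra hge
      push_neg at hge
      have hrB : r ∈ B := ⟨hr, hge⟩
      rw [hBe] at hrB
      exact absurd hrB (notMem_empty r)
    have hanti : AntitoneOn u' (Icc c 1) := by
      apply antitoneOn_aux hcu'.continuousOn
      · intro z hz; exact hd' z ⟨lt_trans hcIoo.1 hz.1, hz.2⟩
      · intro z hz
        have hzI : z ∈ Icc (0:ℝ) 1 := ⟨(lt_trans hcIoo.1 hz.1).le, hz.2.le⟩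
        have := hneg' z ⟨hz.1.le, hz.2.le⟩
        nlinarith [hq z hzI, hf z hzI, mul_nonneg (hq z hzI) (neg_nonneg.mpr this.le)]
    have : u' 1 ≤ u' c := hanti ⟨le_refl c, hcIoo.2.le⟩ ⟨hcIoo.2.le, le_refl 1⟩ hcIoo.2.le
    rw [h1] at this
    exact absurd this (not_le.mpr hu'c)
  · set b := sInf B with hb
    have hbB : b ∈ B := hBcomp.sInf_mem hBne
    have hub : 0 ≤ u b := hbB.2
    have hcb : c < b := by
      rcases eq_or_lt_of_le hbB.1.1 with h | h
      · exfalso; rw [← h] at hub; exact absurd hub (not_le.mpr huc)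
      · exact h
    have hneg' : ∀ r ∈ Ico c b, u r < 0 := by
      intro r hr
      by_contra hge
      push_neg at hge
      have : r ∈ B := ⟨⟨hr.1, le_trans hr.2.le hbB.1.2⟩, hge⟩
      have := csInf_le hBcomp.bddBelow this
      exact absurd this (not_le.mpr hr.2)
    have hanti : AntitoneOn u' (Icc c b) := by
      apply antitoneOn_aux (hcu'.continuousOn)
      · intro z hz
        exact hd' z ⟨lt_trans hcIoo.1 hz.1, lt_of_lt_of_le hz.2 hbB.1.2⟩
      · intro z hz
        have hzI : z ∈ Icc (0:ℝ) 1 :=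
          ⟨(lt_trans hcIoo.1 hz.1).le, (lt_of_lt_of_le hz.2 hbB.1.2).le⟩
        have := hneg' z ⟨hz.1.le, hz.2⟩
        nlinarith [hq z hzI, hf z hzI]
    have hu'neg : ∀ z ∈ Ioo c b, u' z < 0 := by
      intro z hz
      have : u' z ≤ u' c := hanti ⟨le_refl c, hcb.le⟩ ⟨hz.1.le, hz.2.le⟩ hz.1.le
      linarith
    have hantiu : AntitoneOn u (Icc c b) := by
      apply antitoneOn_aux hcu.continuousOn
      · intro z hz
        exact hd z ⟨lt_trans hcIoo.1 hz.1,
          lt_of_lt_of_le hz.2 hbB.1.2⟩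
      · intro z hz; exact (hu'neg z hz).le
    have : u b ≤ u c := hantiu ⟨le_refl c, hcb.le⟩ ⟨hcb.le, le_refl b⟩ hcb.le
    linarith


lemma cont_int_right {g : ℝ → ℝ} (hg : Continuous g) :
    Continuous (fun s => ∫ y in s..(1:ℝ), g y) :=
  continuous_iff_continuousAt.mpr (fun s => (ftc1' hg s).continuousAt)

lemma bvp_rep {u u' q f : ℝ → ℝ}
    (hcu : Continuous u) (hcu' : Continuous u') (hcq : Continuous q) (hcf : Continuous f)
    (hd' : ∀ s ∈ Ioo (0:ℝ) 1, HasDerivAt u' (q s * u s - f s) s)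
    (h1 : u' 1 = 0) :
    ∀ s ∈ Icc (0:ℝ) 1, u' s = ∫ y in s..1, (f y - q y * u y) := by
  set g : ℝ → ℝ := fun y => f y - q y * u y with hg
  have hcg : Continuous g := hcf.sub (hcq.mul hcu)
  set R : ℝ → ℝ := fun s => u' s - ∫ y in s..1, g y with hR
  have hRd : ∀ s ∈ Ioo (0:ℝ) 1, HasDerivAt R ((q s * u s - f s) - (-(g s))) s := by
    intro s hs
    exact (hd' s hs).sub (ftc1' hcg s)
  have hRc : Continuous R := hcu'.sub (cont_int_right hcg)
  have hconst := constOn_aux (u := R) (u' := fun s => (q s * u s - f s) - (-(g s)))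
    hRc.continuousOn (fun z hz => hRd z hz)
    (by intro z hz; simp [hg])
  intro s hs
  have := hconst s hs 1 (right_mem_Icc.mpr zero_le_one)
  have hR1 : R 1 = 0 := by simp [hR, h1]
  rw [hR1] at this
  have : u' s - ∫ y in s..1, g y = 0 := this
  linarith [this]

lemma bvp_bounds {u u' q f : ℝ → ℝ} {Cf Cq : ℝ}
    (hcu : Continuous u) (hcu' : Continuous u') (hcq : Continuous q) (hcf : Continuous f)
    (hd : ∀ s ∈ Ioo (0:ℝ) 1, HasDerivAt u (u' s) s)
    (hd' : ∀ s ∈ Ioo (0:ℝ) 1, HasDerivAt u' (q s * u s - f s) s)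
    (hq : ∀ s ∈ Icc (0:ℝ) 1, 0 ≤ q s) (hf : ∀ s ∈ Icc (0:ℝ) 1, 0 ≤ f s)
    (h0 : u 0 = 0) (h1 : u' 1 = 0)
    (hCf : ∀ y ∈ Icc (0:ℝ) 1, f y ≤ Cf) (hCq : ∀ y ∈ Icc (0:ℝ) 1, q y ≤ Cq) :
    ∀ s ∈ Icc (0:ℝ) 1, 0 ≤ u s ∧ u s ≤ Cf ∧ |u' s| ≤ Cf * (1 + Cq) := by
  have hCf0 : 0 ≤ Cf := le_trans (hf 0 (left_mem_Icc.mpr zero_le_one))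
    (hCf 0 (left_mem_Icc.mpr zero_le_one))
  have hCq0 : 0 ≤ Cq := le_trans (hq 0 (left_mem_Icc.mpr zero_le_one))
    (hCq 0 (left_mem_Icc.mpr zero_le_one))
  have hpos := bvp_nonneg hcu hcu' hd hd' hq hf h0 h1
  have hrep := bvp_rep hcu hcu' hcq hcf hd' h1
  have hcg : Continuous (fun y => f y - q y * u y) := hcf.sub (hcq.mul hcu)
  -- upper bound for u' on Icc 0 1
  have hu'le : ∀ s ∈ Icc (0:ℝ) 1, u' s ≤ Cf * (1 - s) := by
    intro s hs
    rw [hrep s hs]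
    have step1 : ∫ y in s..1, (f y - q y * u y) ≤ ∫ y in s..1, f y := by
      apply intervalIntegral.integral_mono_on hs.2 (hcg.intervalIntegrable _ _)
        (hcf.intervalIntegrable _ _)
      intro y hy
      have hyI : y ∈ Icc (0:ℝ) 1 := ⟨le_trans hs.1 hy.1, hy.2⟩
      nlinarith [mul_nonneg (hq y hyI) (hpos y hyI)]
    have step2 : ∫ y in s..1, f y ≤ ∫ y in s..1, Cf := by
      apply intervalIntegral.integral_mono_on hs.2 (hcf.intervalIntegrable _ _)
        (intervalIntegrable_const)
      intro y hy
      exact hCf y ⟨le_trans hs.1 hy.1, hy.2⟩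
    have step3 : ∫ y in s..1, (Cf : ℝ) = Cf * (1 - s) := by
      rw [intervalIntegral.integral_const, smul_eq_mul]; ring
    linarith
  -- u s ≤ Cf * s ≤ Cf
  have huupper : ∀ s ∈ Icc (0:ℝ) 1, u s ≤ Cf * s := by
    have hmono := monotoneOn_aux (u := fun s => Cf * s - u s) (u' := fun s => Cf - u' s)
      ((continuous_const.mul continuous_id).sub hcu).continuousOn
      (fun z hz => by exact (((hasDerivAt_id z).const_mul Cf).sub (hd z hz)).congr_deriv (by ring))
      (by
        intro z hz
        show (0:ℝ) ≤ Cf - u' z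
        have := hu'le z ⟨hz.1.le, hz.2.le⟩
        nlinarith [mul_nonneg hCf0 hz.1.le])
    intro s hs
    have := hmono (left_mem_Icc.mpr zero_le_one) hs hs.1
    simp [h0] at this
    linarith
  -- lower bound for u'
  have hu'ge : ∀ s ∈ Icc (0:ℝ) 1, -(Cq * Cf) ≤ u' s := by
    intro s hs
    rw [hrep s hs]
    have step1 : ∫ y in s..1, (-(Cq * Cf)) ≤ ∫ y in s..1, (f y - q y * u y) := by
      apply intervalIntegral.integral_mono_on hs.2 intervalIntegrable_const
        (hcg.intervalIntegrable _ _)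
      intro y hy
      have hyI : y ∈ Icc (0:ℝ) 1 := ⟨le_trans hs.1 hy.1, hy.2⟩
      have h1' : q y * u y ≤ Cq * Cf := by
        apply mul_le_mul (hCq y hyI) ?_ (hpos y hyI) hCq0
        exact le_trans (huupper y hyI) (by nlinarith [hyI.2])
      have := hf y hyI
      linarith
    have step3 : ∫ y in s..1, (-(Cq * Cf) : ℝ) = -(Cq * Cf) * (1 - s) := by
      rw [intervalIntegral.integral_const, smul_eq_mul]; ring
    rw [step3] at step1
    nlinarith [mul_nonneg hCq0 hCf0, hs.2, hs.1]
  intro s hs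
  refine ⟨hpos s hs, le_trans (huupper s hs) (by nlinarith [hs.2]), ?_⟩
  rw [abs_le]
  constructor
  · have := hu'ge s hs; nlinarith
  · have := hu'le s hs; nlinarith [hs.1]


lemma bvp_lower {u u' q f : ℝ → ℝ}
    (hcu : Continuous u) (hcu' : Continuous u') (hcq : Continuous q) (hcf : Continuous f)
    (hd : ∀ s ∈ Ioo (0:ℝ) 1, HasDerivAt u (u' s) s)
    (hd' : ∀ s ∈ Ioo (0:ℝ) 1, HasDerivAt u' (q s * u s - f s) s)
    (hq : ∀ s ∈ Icc (0:ℝ) 1, 0 ≤ q s) (hf : ∀ s ∈ Icc (0:ℝ) 1, 0 ≤ f s)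
    (h0 : u 0 = 0) (h1 : u' 1 = 0) :
    ∀ s ∈ Icc (0:ℝ) 1,
      s * ((∫ y in (0:ℝ)..1, y * f y) * Real.exp (-(2 * ∫ y in (0:ℝ)..1, y * q y))) ≤ u s := by
  have hpos := bvp_nonneg hcu hcu' hd hd' hq hf h0 h1
  set Q : ℝ := ∫ y in (0:ℝ)..1, y * q y with hQdef
  set F₁ : ℝ := ∫ y in (0:ℝ)..1, y * f y with hF₁def
  -- auxiliary functions
  set g₀ : ℝ → ℝ := fun s => -(∫ y in s..1, q y) with hg₀def
  have hg₀d : ∀ s, HasDerivAt g₀ (q s) s := fun s => by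
    exact (ftc1' hcq s).neg.congr_deriv (neg_neg _)
  have hcg₀ : Continuous g₀ :=
    continuous_iff_continuousAt.mpr (fun s => (hg₀d s).continuousAt)
  have hg₀1 : g₀ 1 = 0 := by simp [hg₀def]
  have hg₀nonpos : ∀ s ∈ Icc (0:ℝ) 1, g₀ s ≤ 0 := by
    intro s hs
    simp only [hg₀def, neg_nonpos]
    exact intervalIntegral.integral_nonneg hs.2
      (fun y hy => hq y ⟨le_trans hs.1 hy.1, hy.2⟩)
  set φ : ℝ → ℝ := fun s => (∫ y in s..1, y * q y) + s * g₀ s with hφdef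
  have hφd : ∀ s, HasDerivAt φ (g₀ s) s := by
    intro s
    have h1' : HasDerivAt (fun z => ∫ y in z..1, y * q y) (-(s * q s)) s :=
      ftc1' (continuous_id'.mul hcq) s
    have h2' : HasDerivAt (fun z => z * g₀ z) (1 * g₀ s + s * q s) s :=
      (hasDerivAt_id s).mul (hg₀d s)
    have := h1'.add h2'
    exact this.congr_deriv (by ring)
  have hcφ : Continuous φ :=
    continuous_iff_continuousAt.mpr (fun s => (hφd s).continuousAt)
  -- φ s = ∫ (y-s) q over [s,1]
  have hφeq : ∀ s ∈ Icc (0:ℝ) 1, φ s = ∫ y in s..1, (y - s) * q y := by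
    intro s hs
    have h1i : IntervalIntegrable (fun y => y * q y) volume s 1 :=
      (continuous_id'.mul hcq).intervalIntegrable s 1
    have h2i : IntervalIntegrable (fun y => s * q y) volume s 1 :=
      (continuous_const.mul hcq).intervalIntegrable s 1
    have hsub := intervalIntegral.integral_sub h1i h2i
    have hcong : ∫ y in s..1, (y - s) * q y = ∫ y in s..1, (y * q y - s * q y) :=
      intervalIntegral.integral_congr (fun y _ => by ring)
    rw [hcong, hsub, intervalIntegral.integral_const_mul]
    simp only [hφdef, hg₀def]
    ring
  have hφ0 : ∀ s ∈ Icc (0:ℝ) 1, 0 ≤ φ s := by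
    intro s hs
    rw [hφeq s hs]
    apply intervalIntegral.integral_nonneg hs.2
    intro y hy
    exact mul_nonneg (by linarith [hy.1]) (hq y ⟨le_trans hs.1 hy.1, hy.2⟩)
  have hφQ : ∀ s ∈ Icc (0:ℝ) 1, φ s ≤ Q := by
    intro s hs
    rw [hφeq s hs]
    have step1 : ∫ y in s..1, (y - s) * q y ≤ ∫ y in s..1, y * q y := by
      apply intervalIntegral.integral_mono_on hs.2
        (((continuous_id'.sub continuous_const).mul hcq).intervalIntegrable _ _)
        ((continuous_id'.mul hcq).intervalIntegrable _ _)
      intro y hy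
      have hyI : y ∈ Icc (0:ℝ) 1 := ⟨le_trans hs.1 hy.1, hy.2⟩
      show (y - s) * q y ≤ y * q y
      nlinarith [hq y hyI, hs.1]
    have step2 : (∫ y in (0:ℝ)..s, y * q y) + (∫ y in s..1, y * q y) = Q := by
      rw [hQdef]
      exact intervalIntegral.integral_add_adjacent_intervals
        ((continuous_id'.mul hcq).intervalIntegrable _ _)
        ((continuous_id'.mul hcq).intervalIntegrable _ _)
    have step3 : 0 ≤ ∫ y in (0:ℝ)..s, y * q y := by
      apply intervalIntegral.integral_nonneg hs.1
      intro y hy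
      exact mul_nonneg hy.1 (hq y ⟨hy.1, le_trans hy.2 hs.2⟩)
    linarith
  -- w = exp φ ≥ 1 on [0,1]
  set w : ℝ → ℝ := fun s => Real.exp (φ s) with hwdef
  have hwd : ∀ s, HasDerivAt w (g₀ s * w s) s := by
    intro s
    have := (hφd s).exp
    simpa [hwdef, mul_comm] using this
  have hcw : Continuous w := Real.continuous_exp.comp hcφ
  have hw1 : ∀ s ∈ Icc (0:ℝ) 1, 1 ≤ w s := fun s hs =>
    Real.one_le_exp (hφ0 s hs)
  -- h = u' w - u g₀ w
  set h : ℝ → ℝ := fun s => u' s * w s - u s * (g₀ s * w s) with hhdef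
  have hch : Continuous h :=
    (hcu'.mul hcw).sub (hcu.mul (hcg₀.mul hcw))
  have hh1 : h 1 = 0 := by simp [hhdef, h1, hg₀1]
  have hhd : ∀ s ∈ Ioo (0:ℝ) 1,
      HasDerivAt h (-(f s * w s) - u s * g₀ s ^ 2 * w s) s := by
    intro s hs
    have hd1 : HasDerivAt (fun z => u' z * w z)
        ((q s * u s - f s) * w s + u' s * (g₀ s * w s)) s :=
      (hd' s hs).mul (hwd s)
    have hd2 : HasDerivAt (fun z => g₀ z * w z)
        (q s * w s + g₀ s * (g₀ s * w s)) s := (hg₀d s).mul (hwd s)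
    have hd3 : HasDerivAt (fun z => u z * (g₀ z * w z))
        (u' s * (g₀ s * w s) + u s * (q s * w s + g₀ s * (g₀ s * w s))) s :=
      (hd s hs).mul hd2
    have := hd1.sub hd3
    exact this.congr_deriv (by ring)
  -- h s ≥ ∫_s^1 f w  via antitone D1
  set D1 : ℝ → ℝ := fun s => h s - ∫ y in s..1, f y * w y with hD1def
  have hD1anti : AntitoneOn D1 (Icc (0:ℝ) 1) := by
    apply antitoneOn_aux (hch.sub (cont_int_right (hcf.mul hcw))).continuousOn
      (u' := fun s => (-(f s * w s) - u s * g₀ s ^ 2 * w s) - (-(f s * w s)))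
    · intro z hz
      exact (hhd z hz).sub (ftc1' (hcf.mul hcw) z)
    · intro z hz
      have hzI : z ∈ Icc (0:ℝ) 1 := ⟨hz.1.le, hz.2.le⟩
      have : 0 ≤ u z * g₀ z ^ 2 * w z := by
        apply mul_nonneg (mul_nonneg (hpos z hzI) (sq_nonneg _)) (Real.exp_pos _).le
      nlinarith
  have hhge : ∀ s ∈ Icc (0:ℝ) 1, (∫ y in s..1, f y) ≤ h s := by
    intro s hs
    have hD1 : D1 1 ≤ D1 s := hD1anti hs (right_mem_Icc.mpr zero_le_one) hs.2
    have hD11 : D1 1 = 0 := by simp [hD1def, hh1]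
    have step : (∫ y in s..1, f y) ≤ ∫ y in s..1, f y * w y := by
      apply intervalIntegral.integral_mono_on hs.2 (hcf.intervalIntegrable _ _)
        ((hcf.mul hcw).intervalIntegrable _ _)
      intro y hy
      have hyI : y ∈ Icc (0:ℝ) 1 := ⟨le_trans hs.1 hy.1, hy.2⟩
      show f y ≤ f y * w y
      nlinarith [hf y hyI, hw1 y hyI]
    have : (∫ y in s..1, f y * w y) ≤ h s := by
      rw [hD11] at hD1
      simp only [hD1def] at hD1
      linarith
    linarith
  -- V = u * exp(-φ), V' ≥ exp(-2Q) * G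
  set G : ℝ → ℝ := fun s => ∫ y in s..1, f y with hGdef
  have hcG : Continuous G := cont_int_right hcf
  have hGnonneg : ∀ s ∈ Icc (0:ℝ) 1, 0 ≤ G s := by
    intro s hs
    apply intervalIntegral.integral_nonneg hs.2
    intro y hy
    exact hf y ⟨le_trans hs.1 hy.1, hy.2⟩
  set V : ℝ → ℝ := fun s => u s * Real.exp (-φ s) with hVdef
  have hcV : Continuous V := hcu.mul (Real.continuous_exp.comp hcφ.neg)
  have hVd : ∀ s ∈ Ioo (0:ℝ) 1,
      HasDerivAt V ((u' s - g₀ s * u s) * Real.exp (-φ s)) s := by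
    intro s hs
    have hexp : HasDerivAt (fun z => Real.exp (-φ z)) (-g₀ s * Real.exp (-φ s)) s := by
      have := ((hφd s).neg).exp
      simpa [mul_comm] using this
    have := (hd s hs).mul hexp
    exact this.congr_deriv (by ring)
  have hVlow : ∀ s ∈ Ioo (0:ℝ) 1,
      Real.exp (-(2*Q)) * G s ≤ (u' s - g₀ s * u s) * Real.exp (-φ s) := by
    intro s hs
    have hsI : s ∈ Icc (0:ℝ) 1 := ⟨hs.1.le, hs.2.le⟩
    -- (u' - g₀ u) = h * exp(-φ)
    have hkey : (u' s - g₀ s * u s) * Real.exp (-φ s) = h s * Real.exp (-(2 * φ s)) := by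
      have e1 : Real.exp (φ s) * Real.exp (-(2 * φ s)) = Real.exp (-φ s) := by
        rw [← Real.exp_add]; congr 1; ring
      have e2 : (u' s * Real.exp (φ s) - u s * (g₀ s * Real.exp (φ s)))
            * Real.exp (-(2 * φ s))
          = (u' s - g₀ s * u s) * (Real.exp (φ s) * Real.exp (-(2 * φ s))) := by ring
      simp only [hhdef, hwdef]
      rw [e2, e1]
    rw [hkey]
    have h1' : G s ≤ h s := hhge s hsI
    have h2' : Real.exp (-(2*Q)) ≤ Real.exp (-(2 * φ s)) := by
      apply Real.exp_le_exp.mpr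
      have := hφQ s hsI
      linarith
    have hG := hGnonneg s hsI
    have hh0 : 0 ≤ h s := le_trans hG h1'
    calc Real.exp (-(2*Q)) * G s ≤ Real.exp (-(2 * φ s)) * G s := by
          apply mul_le_mul_of_nonneg_right h2' hG
      _ ≤ Real.exp (-(2 * φ s)) * h s := by
          apply mul_le_mul_of_nonneg_left h1' (Real.exp_pos _).le
      _ = h s * Real.exp (-(2 * φ s)) := by ring
  -- Z monotone: V s ≥ exp(-2Q) ∫_0^s G
  have hZmono : MonotoneOn (fun s => V s - Real.exp (-(2*Q)) * ∫ r in (0:ℝ)..s, G r)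
      (Icc (0:ℝ) 1) := by
    apply monotoneOn_aux
      (hcV.sub (continuous_const.mul
        (continuous_iff_continuousAt.mpr (fun s => (ftc1 hcG 0 s).continuousAt)))).continuousOn
      (u' := fun s => (u' s - g₀ s * u s) * Real.exp (-φ s) - Real.exp (-(2*Q)) * G s)
    · intro z hz
      exact (hVd z hz).sub ((ftc1 hcG 0 z).const_mul _)
    · intro z hz
      have := hVlow z hz
      linarith
  have hVge : ∀ s ∈ Icc (0:ℝ) 1,
      Real.exp (-(2*Q)) * (∫ r in (0:ℝ)..s, G r) ≤ V s := by
    intro s hs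
    have := hZmono (left_mem_Icc.mpr zero_le_one) hs hs.1
    simp only [hVdef] at this ⊢
    rw [h0] at this
    simp at this
    linarith
  -- parts identity : ∫_0^s G = s G s + ∫_0^s r f r
  have hparts : ∀ s ∈ Icc (0:ℝ) 1,
      (∫ r in (0:ℝ)..s, G r) = s * G s + ∫ r in (0:ℝ)..s, r * f r := by
    have hconst := constOn_aux (a := (0:ℝ)) (b := 1)
      (u := fun s => (∫ r in (0:ℝ)..s, G r) - (s * G s + ∫ r in (0:ℝ)..s, r * f r))
      (u' := fun s => 0)
      (by
        apply Continuous.continuousOn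
        apply Continuous.sub
        · exact continuous_iff_continuousAt.mpr (fun s => (ftc1 hcG 0 s).continuousAt)
        · apply Continuous.add (continuous_id'.mul hcG)
          exact continuous_iff_continuousAt.mpr
            (fun s => (ftc1 (continuous_id'.mul hcf) 0 s).continuousAt))
      (by
        intro z hz
        have hd1 : HasDerivAt (fun s => ∫ r in (0:ℝ)..s, G r) (G z) z := ftc1 hcG 0 z
        have hd2 : HasDerivAt (fun s => s * G s) (1 * G z + z * -(f z)) z :=
          (hasDerivAt_id z).mul (ftc1' hcf z)
        have hd3 : HasDerivAt (fun s => ∫ r in (0:ℝ)..s, r * f r) (z * f z) z :=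
          ftc1 (continuous_id'.mul hcf) 0 z
        have := hd1.sub (hd2.add hd3)
        exact this.congr_deriv (by ring))
      (fun z _ => rfl)
    intro s hs
    have := hconst s hs 0 (left_mem_Icc.mpr zero_le_one)
    simp at this
    linarith
  -- ∫_0^s G ≥ s F₁
  have hintlow : ∀ s ∈ Icc (0:ℝ) 1, s * F₁ ≤ ∫ r in (0:ℝ)..s, G r := by
    intro s hs
    rw [hparts s hs]
    have hsplit : (∫ y in (0:ℝ)..s, y * f y) + (∫ y in s..1, y * f y) = F₁ := by
      rw [hF₁def]
      exact intervalIntegral.integral_add_adjacent_intervals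
        ((continuous_id'.mul hcf).intervalIntegrable _ _)
        ((continuous_id'.mul hcf).intervalIntegrable _ _)
    have hb1 : s * (∫ y in s..1, y * f y) ≤ s * G s := by
      apply mul_le_mul_of_nonneg_left ?_ hs.1
      apply intervalIntegral.integral_mono_on hs.2
        ((continuous_id'.mul hcf).intervalIntegrable _ _)
        (hcf.intervalIntegrable _ _)
      intro y hy
      have hyI : y ∈ Icc (0:ℝ) 1 := ⟨le_trans hs.1 hy.1, hy.2⟩
      show y * f y ≤ f y
      nlinarith [mul_nonneg (sub_nonneg.mpr hyI.2) (hf y hyI)]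
    have hb2pos : 0 ≤ ∫ y in (0:ℝ)..s, y * f y := by
      apply intervalIntegral.integral_nonneg hs.1
      intro y hy
      exact mul_nonneg hy.1 (hf y ⟨hy.1, le_trans hy.2 hs.2⟩)
    have hb2 : s * (∫ y in (0:ℝ)..s, y * f y) ≤ ∫ y in (0:ℝ)..s, y * f y := by
      nlinarith [hs.2]
    nlinarith [hs.2]
  -- final chain
  intro s hs
  have hVs := hVge s hs
  have hIs := hintlow s hs
  have huV : V s ≤ u s := by
    simp only [hVdef]
    have hexple : Real.exp (-φ s) ≤ 1 := by
      rw [Real.exp_le_one_iff]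
      linarith [hφ0 s hs]
    nlinarith [hpos s hs, Real.exp_pos (-φ s)]
  have : Real.exp (-(2*Q)) * (s * F₁) ≤ V s := by
    calc Real.exp (-(2*Q)) * (s * F₁) ≤ Real.exp (-(2*Q)) * ∫ r in (0:ℝ)..s, G r := by
          apply mul_le_mul_of_nonneg_left hIs (Real.exp_pos _).le
      _ ≤ V s := hVs
  nlinarith [this, huV]


variable {V : Type*} [NormedAddCommGroup V] [NormedSpace ℝ V]

/-- two functions continuous on `[a,b]` agreeing on `(a,b)` agree on `[a,b]`. -/
lemma eqOn_Icc_of_eqOn_Ioo {f g : ℝ → V} {a b : ℝ} (hab : a < b)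
    (hf : ContinuousOn f (Icc a b)) (hg : ContinuousOn g (Icc a b))
    (h : ∀ t ∈ Ioo a b, f t = g t) : ∀ t ∈ Icc a b, f t = g t := by
  intro t ht
  have htc : t ∈ closure (Ioo a b) := by rw [closure_Ioo hab.ne]; exact ht
  have hne : (nhdsWithin t (Ioo a b)).NeBot := mem_closure_iff_nhdsWithin_neBot.1 htc
  have h1 : Filter.Tendsto f (nhdsWithin t (Ioo a b)) (nhds (f t)) :=
    (hf t ht).mono_left (nhdsWithin_mono t Ioo_subset_Icc_self)
  have h2 : Filter.Tendsto g (nhdsWithin t (Ioo a b)) (nhds (g t)) :=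
    (hg t ht).mono_left (nhdsWithin_mono t Ioo_subset_Icc_self)
  have h3 : Filter.Tendsto f (nhdsWithin t (Ioo a b)) (nhds (g t)) := by
    refine h2.congr' ?_
    filter_upwards [self_mem_nhdsWithin] with z hz using (h z hz).symm
  exact tendsto_nhds_unique h1 h3

/-- with zero right-hand side the BVP only has the trivial solution. -/
lemma bvp_zero {u u' q f : ℝ → ℝ}
    (hcu : Continuous u) (hcu' : Continuous u') (hcq : Continuous q) (hcf : Continuous f)
    (hd : ∀ s ∈ Ioo (0:ℝ) 1, HasDerivAt u (u' s) s)
    (hd' : ∀ s ∈ Ioo (0:ℝ) 1, HasDerivAt u' (q s * u s - f s) s)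
    (hq : ∀ s ∈ Icc (0:ℝ) 1, 0 ≤ q s) (hf : ∀ s ∈ Icc (0:ℝ) 1, 0 ≤ f s)
    (h0 : u 0 = 0) (h1 : u' 1 = 0)
    (hf0 : ∀ s ∈ Icc (0:ℝ) 1, f s = 0) :
    ∀ s ∈ Icc (0:ℝ) 1, u s = 0 := by
  have hpos := bvp_nonneg hcu hcu' hd hd' hq hf h0 h1
  have hrep := bvp_rep hcu hcu' hcq hcf hd' h1
  have hu'np : ∀ s ∈ Icc (0:ℝ) 1, u' s ≤ 0 := by
    intro s hs
    rw [hrep s hs]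
    have : 0 ≤ ∫ y in s..1, -(f y - q y * u y) := by
      apply intervalIntegral.integral_nonneg hs.2
      intro y hy
      have hyI : y ∈ Icc (0:ℝ) 1 := ⟨le_trans hs.1 hy.1, hy.2⟩
      have := hf0 y hyI
      nlinarith [mul_nonneg (hq y hyI) (hpos y hyI)]
    rw [intervalIntegral.integral_neg] at this
    linarith
  have hanti : AntitoneOn u (Icc (0:ℝ) 1) :=
    antitoneOn_aux hcu.continuousOn (fun z hz => hd z hz)
      (fun z hz => hu'np z ⟨hz.1.le, hz.2.le⟩)
  intro s hs
  have h1' : u s ≤ u 0 := hanti (left_mem_Icc.mpr zero_le_one) hs hs.1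
  rw [h0] at h1'
  exact le_antisymm h1' (hpos s hs)

end Str19
end
open MeasureTheory

set_option maxHeartbeats 1000000 in
/-- Rigidity for the inextensible string without gravity (`g = 0`): if `(x, τ)` solves
`ẍ = (τ x')'`, `|x'| = 1` on `(0,1)×(0,T)` with `x(1,t) = 0`, `τ(0,t) = 0`, where `τ`
solves the two-point BVP `-τ'' + |x''|² τ = |ẋ'|²`, `τ(0) = 0`, `τ'(1) = 0` at each
time, and the stability condition fails (`inf τ(s,t)/s ≤ 0`), then `ẋ ≡ 0`,
`x(s,t) ≡ x(s,0)` and `τ ≡ 0`. -/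
theorem stmt_19 (T : ℝ) (hT : 0 < T)
    (x xs xss xt xtt xts : ℝ → ℝ → EuclideanSpace ℝ (Fin 3))
    (τ τs : ℝ → ℝ → ℝ)
    -- space derivatives
    (hxs : ∀ t ∈ Set.Icc (0:ℝ) T, ∀ s ∈ Set.Icc (0:ℝ) 1,
      HasDerivWithinAt (fun s' => x s' t) (xs s t) (Set.Icc 0 1) s)
    (hxss : ∀ t ∈ Set.Icc (0:ℝ) T, ∀ s ∈ Set.Icc (0:ℝ) 1,
      HasDerivWithinAt (fun s' => xs s' t) (xss s t) (Set.Icc 0 1) s)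
    (hτs : ∀ t ∈ Set.Icc (0:ℝ) T, ∀ s ∈ Set.Icc (0:ℝ) 1,
      HasDerivWithinAt (fun s' => τ s' t) (τs s t) (Set.Icc 0 1) s)
    -- time derivatives
    (hxt : ∀ s ∈ Set.Icc (0:ℝ) 1, ∀ t ∈ Set.Icc (0:ℝ) T,
      HasDerivWithinAt (fun t' => x s t') (xt s t) (Set.Icc 0 T) t)
    (hxtt : ∀ s ∈ Set.Icc (0:ℝ) 1, ∀ t ∈ Set.Icc (0:ℝ) T,
      HasDerivWithinAt (fun t' => xt s t') (xtt s t) (Set.Icc 0 T) t)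
    (hxts : ∀ s ∈ Set.Icc (0:ℝ) 1, ∀ t ∈ Set.Icc (0:ℝ) T,
      HasDerivWithinAt (fun t' => xs s t') (xts s t) (Set.Icc 0 T) t)
    -- regularity of the solution
    (hreg_xt : ContinuousOn (fun p : ℝ × ℝ => xt p.1 p.2)
      (Set.Icc 0 1 ×ˢ Set.Icc 0 T))
    (hreg_xts : ContinuousOn (fun p : ℝ × ℝ => xts p.1 p.2)
      (Set.Icc 0 1 ×ˢ Set.Icc 0 T))
    (hreg_xss : ContinuousOn (fun p : ℝ × ℝ => xss p.1 p.2)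
      (Set.Icc 0 1 ×ˢ Set.Icc 0 T))
    -- the equation of motion with g = 0 : ẍ = (τ x')' = τ' x' + τ x''
    (heq : ∀ t ∈ Set.Icc (0:ℝ) T, ∀ s ∈ Set.Icc (0:ℝ) 1,
      xtt s t = τs s t • xs s t + τ s t • xss s t)
    -- inextensibility
    (hconstr : ∀ t ∈ Set.Icc (0:ℝ) T, ∀ s ∈ Set.Icc (0:ℝ) 1, ‖xs s t‖ = 1)
    -- boundary conditions
    (hbc : ∀ t ∈ Set.Icc (0:ℝ) T, x 1 t = 0 ∧ τ 0 t = 0)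
    -- τ solves the two-point boundary value problem -τ'' + |x''|² τ = |ẋ'|², τ'(1) = 0
    (hbvp : ∀ t ∈ Set.Icc (0:ℝ) T, ∀ s ∈ Set.Icc (0:ℝ) 1,
      HasDerivWithinAt (fun s' => τs s' t)
        (‖xss s t‖ ^ 2 * τ s t - ‖xts s t‖ ^ 2) (Set.Icc 0 1) s)
    (hbvp1 : ∀ t ∈ Set.Icc (0:ℝ) T, τs 1 t = 0)
    -- failure of the stability condition : inf τ(s,t)/s ≤ 0
    (hfail : ∀ c > (0:ℝ), ∃ s ∈ Set.Ioo (0:ℝ) 1, ∃ t ∈ Set.Icc (0:ℝ) T,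
      τ s t / s < c) :
    ∀ s ∈ Set.Icc (0:ℝ) 1, ∀ t ∈ Set.Icc (0:ℝ) T,
      xt s t = 0 ∧ x s t = x s 0 ∧ τ s t = 0 := by
  classical
  have hT0 : (0:ℝ) ≤ T := hT.le
  have h0I : (0:ℝ) ∈ Set.Icc (0:ℝ) 1 := Set.left_mem_Icc.mpr zero_le_one
  have h1I : (1:ℝ) ∈ Set.Icc (0:ℝ) 1 := Set.right_mem_Icc.mpr zero_le_one
  have h0J : (0:ℝ) ∈ Set.Icc (0:ℝ) T := Set.left_mem_Icc.mpr hT0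
  have hTJ : T ∈ Set.Icc (0:ℝ) T := Set.right_mem_Icc.mpr hT0
  have hpI : ∀ r : ℝ, Str19.pj 1 r ∈ Set.Icc (0:ℝ) 1 := Str19.pj_mem zero_le_one
  have hpT : ∀ r : ℝ, Str19.pj T r ∈ Set.Icc (0:ℝ) T := Str19.pj_mem hT0
  -- continuity in `s` for fixed time
  have cx : ∀ t ∈ Set.Icc (0:ℝ) T, ContinuousOn (fun s => x s t) (Set.Icc (0:ℝ) 1) :=
    fun t ht s hs => (hxs t ht s hs).continuousWithinAt
  have cxs : ∀ t ∈ Set.Icc (0:ℝ) T, ContinuousOn (fun s => xs s t) (Set.Icc (0:ℝ) 1) :=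
    fun t ht s hs => (hxss t ht s hs).continuousWithinAt
  have cτ : ∀ t ∈ Set.Icc (0:ℝ) T, ContinuousOn (fun s => τ s t) (Set.Icc (0:ℝ) 1) :=
    fun t ht s hs => (hτs t ht s hs).continuousWithinAt
  have cτs : ∀ t ∈ Set.Icc (0:ℝ) T, ContinuousOn (fun s => τs s t) (Set.Icc (0:ℝ) 1) :=
    fun t ht s hs => (hbvp t ht s hs).continuousWithinAt
  -- `xt 1 t = 0`
  have xt1 : ∀ t ∈ Set.Icc (0:ℝ) T, xt 1 t = 0 := by
    intro t ht
    have hc : HasDerivWithinAt (fun t' => x 1 t') 0 (Set.Icc 0 T) t :=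
      (hasDerivWithinAt_const t _ (0 : EuclideanSpace ℝ (Fin 3))).congr
        (fun y hy => (hbc y hy).1) ((hbc t ht).1)
    exact Str19.hdw_unique (hxt 1 h1I t ht) hc (uniqueDiffOn_Icc hT t ht)
  -- ⟪xs, xts⟫ = 0
  have ip_ts : ∀ s ∈ Set.Icc (0:ℝ) 1, ∀ t ∈ Set.Icc (0:ℝ) T,
      (inner ℝ (xs s t) (xts s t) : ℝ) = 0 := by
    intro s hs t ht
    have hdi : HasDerivWithinAt (fun t' => (inner ℝ (xs s t') (xs s t') : ℝ))
        (inner ℝ (xs s t) (xts s t) + inner ℝ (xts s t) (xs s t)) (Set.Icc 0 T) t :=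
      (hxts s hs t ht).inner ℝ (hxts s hs t ht)
    have hdc : HasDerivWithinAt (fun t' => (inner ℝ (xs s t') (xs s t') : ℝ)) 0
        (Set.Icc 0 T) t := by
      apply (hasDerivWithinAt_const t _ (1:ℝ)).congr
      · intro y hy
        rw [real_inner_self_eq_norm_sq, hconstr y hy s hs]; norm_num
      · rw [real_inner_self_eq_norm_sq, hconstr t ht s hs]; norm_num
    have hu := Str19.hdw_unique hdi hdc (uniqueDiffOn_Icc hT t ht)
    have hcomm : (inner ℝ (xts s t) (xs s t) : ℝ) = inner ℝ (xs s t) (xts s t) :=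
      real_inner_comm _ _
    rw [hcomm] at hu
    linarith
  -- global bounds
  have hKcomp : IsCompact (Set.Icc (0:ℝ) 1 ×ˢ Set.Icc (0:ℝ) T) :=
    isCompact_Icc.prod isCompact_Icc
  obtain ⟨Mq, hMq⟩ := hKcomp.exists_bound_of_continuousOn hreg_xss
  obtain ⟨Mf, hMf⟩ := hKcomp.exists_bound_of_continuousOn hreg_xts
  obtain ⟨Mt, hMt⟩ := hKcomp.exists_bound_of_continuousOn hreg_xt
  have hMq0 : 0 ≤ Mq := le_trans (norm_nonneg _) (hMq (0,0) ⟨h0I, h0J⟩)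
  have hMf0 : 0 ≤ Mf := le_trans (norm_nonneg _) (hMf (0,0) ⟨h0I, h0J⟩)
  have hMt0 : 0 ≤ Mt := le_trans (norm_nonneg _) (hMt (0,0) ⟨h0I, h0J⟩)
  -- clamped auxiliary functions
  set uF : ℝ → ℝ → ℝ := fun t s => τ (Str19.pj 1 s) t with huFdef
  set uF' : ℝ → ℝ → ℝ := fun t s => τs (Str19.pj 1 s) t with huF'def
  set qF : ℝ → ℝ → ℝ := fun t s => ‖xss (Str19.pj 1 s) (Str19.pj T t)‖ ^ 2 with hqFdef
  set fF : ℝ → ℝ → ℝ := fun t s => ‖xts (Str19.pj 1 s) (Str19.pj T t)‖ ^ 2 with hfFdef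
  -- continuity of the clamped functions
  have cqF : ∀ t, Continuous (qF t) := by
    intro t
    have : Continuous (fun s => xss (Str19.pj 1 s) (Str19.pj T t)) :=
      hreg_xss.comp_continuous
        ((Str19.continuous_pj 1).prodMk continuous_const)
        (fun s => Set.mk_mem_prod (hpI s) (hpT t))
    exact (this.norm).pow 2
  have cfF : ∀ t, Continuous (fF t) := by
    intro t
    have : Continuous (fun s => xts (Str19.pj 1 s) (Str19.pj T t)) :=
      hreg_xts.comp_continuous
        ((Str19.continuous_pj 1).prodMk continuous_const)
        (fun s => Set.mk_mem_prod (hpI s) (hpT t))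
    exact (this.norm).pow 2
  have cuF : ∀ t ∈ Set.Icc (0:ℝ) T, Continuous (uF t) := by
    intro t ht
    exact (cτ t ht).comp_continuous (Str19.continuous_pj 1) hpI
  have cuF' : ∀ t ∈ Set.Icc (0:ℝ) T, Continuous (uF' t) := by
    intro t ht
    exact (cτs t ht).comp_continuous (Str19.continuous_pj 1) hpI
  -- derivatives of the clamped functions
  have duF : ∀ t ∈ Set.Icc (0:ℝ) T, ∀ s ∈ Set.Ioo (0:ℝ) 1,
      HasDerivAt (uF t) (uF' t s) s := by
    intro t ht s hs
    have hsI : s ∈ Set.Icc (0:ℝ) 1 := Set.Ioo_subset_Icc_self hs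
    have h2 : HasDerivWithinAt (uF t) (τs s t) (Set.Icc 0 1) s :=
      (hτs t ht s hsI).congr (fun y hy => by simp [huFdef, Str19.pj_eq hy])
        (by simp [huFdef, Str19.pj_eq hsI])
    have : uF' t s = τs s t := by simp [huF'def, Str19.pj_eq hsI]
    rw [this]
    exact h2.hasDerivAt (Icc_mem_nhds hs.1 hs.2)
  have duF' : ∀ t ∈ Set.Icc (0:ℝ) T, ∀ s ∈ Set.Ioo (0:ℝ) 1,
      HasDerivAt (uF' t) (qF t s * uF t s - fF t s) s := by
    intro t ht s hs
    have hsI : s ∈ Set.Icc (0:ℝ) 1 := Set.Ioo_subset_Icc_self hs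
    have h2 : HasDerivWithinAt (uF' t) (‖xss s t‖ ^ 2 * τ s t - ‖xts s t‖ ^ 2)
        (Set.Icc 0 1) s :=
      (hbvp t ht s hsI).congr (fun y hy => by simp [huF'def, Str19.pj_eq hy])
        (by simp [huF'def, Str19.pj_eq hsI])
    have heq2 : qF t s * uF t s - fF t s = ‖xss s t‖ ^ 2 * τ s t - ‖xts s t‖ ^ 2 := by
      simp [hqFdef, huFdef, hfFdef, Str19.pj_eq hsI, Str19.pj_eq ht]
    rw [heq2]
    exact h2.hasDerivAt (Icc_mem_nhds hs.1 hs.2)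
  have huF0 : ∀ t ∈ Set.Icc (0:ℝ) T, uF t 0 = 0 := by
    intro t ht; simp [huFdef, Str19.pj_eq h0I, (hbc t ht).2]
  have huF'1 : ∀ t ∈ Set.Icc (0:ℝ) T, uF' t 1 = 0 := by
    intro t ht; simp [huF'def, Str19.pj_eq h1I, hbvp1 t ht]
  have hqF0 : ∀ t, ∀ s ∈ Set.Icc (0:ℝ) 1, 0 ≤ qF t s := fun t s _ => sq_nonneg _
  have hfF0 : ∀ t, ∀ s ∈ Set.Icc (0:ℝ) 1, 0 ≤ fF t s := fun t s _ => sq_nonneg _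
  have hqFb : ∀ t, ∀ s ∈ Set.Icc (0:ℝ) 1, qF t s ≤ Mq ^ 2 := by
    intro t s _
    have := hMq (Str19.pj 1 s, Str19.pj T t) ⟨hpI s, hpT t⟩
    simp only [hqFdef]
    nlinarith [norm_nonneg (xss (Str19.pj 1 s) (Str19.pj T t))]
  have hfFb : ∀ t, ∀ s ∈ Set.Icc (0:ℝ) 1, fF t s ≤ Mf ^ 2 := by
    intro t s _
    have := hMf (Str19.pj 1 s, Str19.pj T t) ⟨hpI s, hpT t⟩
    simp only [hfFdef]
    nlinarith [norm_nonneg (xts (Str19.pj 1 s) (Str19.pj T t))]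
  -- per-time bounds from the BVP
  have key1 : ∀ t ∈ Set.Icc (0:ℝ) T, ∀ s ∈ Set.Icc (0:ℝ) 1,
      0 ≤ τ s t ∧ τ s t ≤ Mf ^ 2 ∧ |τs s t| ≤ Mf ^ 2 * (1 + Mq ^ 2) := by
    intro t ht s hs
    have := Str19.bvp_bounds (cuF t ht) (cuF' t ht) (cqF t) (cfF t)
      (duF t ht) (duF' t ht) (hqF0 t) (hfF0 t) (huF0 t ht) (huF'1 t ht)
      (hfFb t) (hqFb t) s hs
    simpa [huFdef, huF'def, Str19.pj_eq hs] using this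
  -- the stability functional
  set Kf : ℝ → ℝ := fun t => (∫ y in (0:ℝ)..1, y * fF t y) *
      Real.exp (-(2 * ∫ y in (0:ℝ)..1, y * qF t y)) with hKfdef
  have key2 : ∀ t ∈ Set.Icc (0:ℝ) T, ∀ s ∈ Set.Icc (0:ℝ) 1, s * Kf t ≤ τ s t := by
    intro t ht s hs
    have := Str19.bvp_lower (cuF t ht) (cuF' t ht) (cqF t) (cfF t)
      (duF t ht) (duF' t ht) (hqF0 t) (hfF0 t) (huF0 t ht) (huF'1 t ht) s hs
    simpa [huFdef, hKfdef, Str19.pj_eq hs] using this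
  -- joint continuity of clamped fields
  have cXtsJ : Continuous (fun p : ℝ × ℝ => xts (Str19.pj 1 p.2) (Str19.pj T p.1)) :=
    hreg_xts.comp_continuous
      (((Str19.continuous_pj 1).comp continuous_snd).prodMk
        ((Str19.continuous_pj T).comp continuous_fst))
      (fun p => Set.mk_mem_prod (hpI p.2) (hpT p.1))
  have cXssJ : Continuous (fun p : ℝ × ℝ => xss (Str19.pj 1 p.2) (Str19.pj T p.1)) :=
    hreg_xss.comp_continuous
      (((Str19.continuous_pj 1).comp continuous_snd).prodMk
        ((Str19.continuous_pj T).comp continuous_fst))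
      (fun p => Set.mk_mem_prod (hpI p.2) (hpT p.1))
  have cXtJ : Continuous (fun p : ℝ × ℝ => xt (Str19.pj 1 p.2) (Str19.pj T p.1)) :=
    hreg_xt.comp_continuous
      (((Str19.continuous_pj 1).comp continuous_snd).prodMk
        ((Str19.continuous_pj T).comp continuous_fst))
      (fun p => Set.mk_mem_prod (hpI p.2) (hpT p.1))
  have cXt1 : ∀ t', Continuous (fun y => xt (Str19.pj 1 y) (Str19.pj T t')) := by
    intro t'
    have : Continuous (fun y : ℝ => ((t', y) : ℝ × ℝ)) :=
      (continuous_const.prodMk continuous_id)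
    exact cXtJ.comp this
  -- Kf is continuous
  have hKfc : Continuous Kf := by
    have hF1c : Continuous (fun t => ∫ y in (0:ℝ)..1, y * fF t y) := by
      apply intervalIntegral.continuous_parametric_intervalIntegral_of_continuous'
        (μ := volume) (f := fun t y => y * fF t y) ?_ 0 1
      have : (Function.uncurry fun t y => y * fF t y)
          = fun p : ℝ × ℝ => p.2 * ‖xts (Str19.pj 1 p.2) (Str19.pj T p.1)‖ ^ 2 := rfl
      rw [this]
      exact continuous_snd.mul ((cXtsJ.norm).pow 2)
    have hQc : Continuous (fun t => ∫ y in (0:ℝ)..1, y * qF t y) := by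
      apply intervalIntegral.continuous_parametric_intervalIntegral_of_continuous'
        (μ := volume) (f := fun t y => y * qF t y) ?_ 0 1
      have : (Function.uncurry fun t y => y * qF t y)
          = fun p : ℝ × ℝ => p.2 * ‖xss (Str19.pj 1 p.2) (Str19.pj T p.1)‖ ^ 2 := rfl
      rw [this]
      exact continuous_snd.mul ((cXssJ.norm).pow 2)
    exact hF1c.mul (Real.continuous_exp.comp ((continuous_const.mul hQc).neg))
  -- the minimum of Kf on [0,T] is nonpositive, giving a time with no motion
  obtain ⟨t₀, ht₀J, ht₀min⟩ :=
    isCompact_Icc.exists_isMinOn (α := ℝ) ⟨0, h0J⟩ hKfc.continuousOn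
  have hxts_t₀ : ∀ r ∈ Set.Ioo (0:ℝ) 1, xts r t₀ = 0 := by
    have hmin : ∀ t ∈ Set.Icc (0:ℝ) T, Kf t₀ ≤ Kf t := fun t htm => ht₀min htm
    have hK0 : Kf t₀ ≤ 0 := by
      by_contra hpos
      push_neg at hpos
      obtain ⟨s, hsIoo, t, htJ, hlt⟩ := hfail (Kf t₀) hpos
      have hb := key2 t htJ s (Set.Ioo_subset_Icc_self hsIoo)
      have hsc : s * Kf t₀ ≤ s * Kf t :=
        mul_le_mul_of_nonneg_left (hmin t htJ) hsIoo.1.le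
      rw [div_lt_iff₀ hsIoo.1] at hlt
      nlinarith
    have hF1nonneg : 0 ≤ ∫ y in (0:ℝ)..1, y * fF t₀ y :=
      intervalIntegral.integral_nonneg zero_le_one
        (fun y hy => mul_nonneg hy.1 (sq_nonneg _))
    have hF1zero : ∫ y in (0:ℝ)..1, y * fF t₀ y = 0 := by
      have hexp : 0 < Real.exp (-(2 * ∫ y in (0:ℝ)..1, y * qF t₀ y)) := Real.exp_pos _
      have h1 : (∫ y in (0:ℝ)..1, y * fF t₀ y) *
          Real.exp (-(2 * ∫ y in (0:ℝ)..1, y * qF t₀ y)) ≤ 0 := hK0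
      have h2 : 0 ≤ (∫ y in (0:ℝ)..1, y * fF t₀ y) *
          Real.exp (-(2 * ∫ y in (0:ℝ)..1, y * qF t₀ y)) :=
        mul_nonneg hF1nonneg hexp.le
      have h3 := le_antisymm h1 h2
      rcases mul_eq_zero.mp h3 with h4 | h4
      · exact h4
      · exact absurd h4 (ne_of_gt hexp)
    have hzero := Str19.zero_of_integral_zero (f := fun y => y * fF t₀ y)
      (continuous_id'.mul (cfF t₀))
      (fun y hy => mul_nonneg hy.1 (sq_nonneg _)) hF1zero
    intro r hr
    have hrI : r ∈ Set.Icc (0:ℝ) 1 := Set.Ioo_subset_Icc_self hr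
    have h5 := hzero r hrI
    simp only [hfFdef, Str19.pj_eq hrI, Str19.pj_eq ht₀J] at h5
    rcases mul_eq_zero.mp h5 with h6 | h6
    · exact absurd h6 (ne_of_gt hr.1)
    · exact norm_eq_zero.mp (sq_eq_zero_iff.mp h6)
  -- representation of xt via xts
  have hxtrep : ∀ s ∈ Set.Icc (0:ℝ) 1, ∀ t ∈ Set.Icc (0:ℝ) T,
      xt s t = ∫ r in (1:ℝ)..s, xts (Str19.pj 1 r) t := by
    intro s hs
    have hsub : Set.Icc s 1 ⊆ Set.Icc (0:ℝ) 1 := Set.Icc_subset_Icc hs.1 le_rfl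
    -- the primitive identity at each fixed time
    have hYeq : ∀ t' ∈ Set.Icc (0:ℝ) T,
        (∫ r in (1:ℝ)..s, xs (Str19.pj 1 r) t') = x s t' - x 1 t' := by
      intro t' ht'
      have hint : IntervalIntegrable (fun r => xs r t') volume s 1 := by
        apply ContinuousOn.intervalIntegrable
        rw [Set.uIcc_of_le hs.2]
        exact (cxs t' ht').mono hsub
      have h1 : ∫ r in s..1, xs r t' = x 1 t' - x s t' := by
        apply intervalIntegral.integral_eq_sub_of_hasDeriv_right_of_le hs.2
          ((cx t' ht').mono hsub) ?_ hint
        intro r hr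
        have hrI : r ∈ Set.Ioo (0:ℝ) 1 := ⟨lt_of_le_of_lt hs.1 hr.1, hr.2⟩
        exact ((hxs t' ht' r (Set.Ioo_subset_Icc_self hrI)).hasDerivAt
          (Icc_mem_nhds hrI.1 hrI.2)).hasDerivWithinAt
      have h2 : ∫ r in s..1, xs (Str19.pj 1 r) t' = ∫ r in s..1, xs r t' := by
        apply intervalIntegral.integral_congr
        intro r hr
        rw [Set.uIcc_of_le hs.2] at hr
        show xs (Str19.pj 1 r) t' = xs r t'
        rw [Str19.pj_eq (hsub hr)]
      rw [intervalIntegral.integral_symm, h2, h1, neg_sub]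
    -- identity for interior times via differentiation under the integral sign
    have hIoo_eq : ∀ t ∈ Set.Ioo (0:ℝ) T,
        xt s t - xt 1 t = ∫ r in (1:ℝ)..s, xts (Str19.pj 1 r) t := by
      intro t htI
      have htJ : t ∈ Set.Icc (0:ℝ) T := Set.Ioo_subset_Icc_self htI
      have hε0 : 0 < min t (T - t) := lt_min htI.1 (sub_pos.mpr htI.2)
      have hball : Metric.ball t (min t (T - t)) ⊆ Set.Ioo 0 T := by
        intro z hz
        rw [Metric.mem_ball, Real.dist_eq, abs_lt] at hz
        constructor
        · have := min_le_left t (T - t); linarith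
        · have := min_le_right t (T - t); linarith
      have m1 : ∀ᶠ t' in nhds t, AEStronglyMeasurable
          (fun r => xs (Str19.pj 1 r) t') (volume.restrict (Set.uIoc 1 s)) := by
        apply Filter.eventually_of_mem (Ioo_mem_nhds htI.1 htI.2)
        intro t' ht'
        exact (((cxs t' (Set.Ioo_subset_Icc_self ht')).comp_continuous
          (Str19.continuous_pj 1) hpI)).aestronglyMeasurable
      have m2 : IntervalIntegrable (fun r => xs (Str19.pj 1 r) t) volume 1 s :=
        (((cxs t htJ).comp_continuous
          (Str19.continuous_pj 1) hpI)).intervalIntegrable _ _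
      have m3 : AEStronglyMeasurable (fun r => xts (Str19.pj 1 r) t)
          (volume.restrict (Set.uIoc 1 s)) := by
        have : Continuous (fun r => xts (Str19.pj 1 r) t) :=
          hreg_xts.comp_continuous ((Str19.continuous_pj 1).prodMk continuous_const)
            (fun r => Set.mk_mem_prod (hpI r) htJ)
        exact this.aestronglyMeasurable
      have m4 : ∀ᵐ r ∂volume, r ∈ Set.uIoc (1:ℝ) s →
          ∀ t' ∈ Metric.ball t (min t (T - t)), ‖xts (Str19.pj 1 r) t'‖ ≤ Mf := by
        apply Filter.Eventually.of_forall
        intro r _ t' ht'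
        have ht'J : t' ∈ Set.Icc (0:ℝ) T := Set.Ioo_subset_Icc_self (hball ht')
        exact hMf (Str19.pj 1 r, t') ⟨hpI r, ht'J⟩
      have m5 : IntervalIntegrable (fun _ : ℝ => Mf) volume 1 s :=
        intervalIntegrable_const
      have m6 : ∀ᵐ r ∂volume, r ∈ Set.uIoc (1:ℝ) s →
          ∀ t' ∈ Metric.ball t (min t (T - t)),
            HasDerivAt (fun t'' => xs (Str19.pj 1 r) t'') (xts (Str19.pj 1 r) t') t' := by
        apply Filter.Eventually.of_forall
        intro r _ t' ht'
        have ht'I : t' ∈ Set.Ioo (0:ℝ) T := hball ht'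
        exact (hxts (Str19.pj 1 r) (hpI r) t' (Set.Ioo_subset_Icc_self ht'I)).hasDerivAt
          (Icc_mem_nhds ht'I.1 ht'I.2)
      have hmain := (intervalIntegral.hasDerivAt_integral_of_dominated_loc_of_deriv_le
          (𝕜 := ℝ) (μ := volume)
          (F := fun t' r => xs (Str19.pj 1 r) t') (F' := fun t' r => xts (Str19.pj 1 r) t')
          (bound := fun _ => Mf) (a := 1) (b := s) (x₀ := t) (Metric.ball_mem_nhds t hε0) m1 m2 m3 m4 m5 m6).2
      -- identify the two derivatives
      have hflip : HasDerivAt (fun t' => x s t' - x 1 t')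
          (∫ r in (1:ℝ)..s, xts (Str19.pj 1 r) t) t := by
        apply hmain.congr_of_eventuallyEq
        filter_upwards [Ioo_mem_nhds htI.1 htI.2] with z hz
        exact (hYeq z (Set.Ioo_subset_Icc_self hz)).symm
      have hd2 : HasDerivAt (fun t' => x s t' - x 1 t') (xt s t - xt 1 t) t :=
        ((hxt s hs t htJ).sub (hxt 1 h1I t htJ)).hasDerivAt (Icc_mem_nhds htI.1 htI.2)
      exact hd2.unique hflip
    -- extend to all times by continuity
    have hcL : ContinuousOn (fun t => xt s t - xt 1 t) (Set.Icc (0:ℝ) T) := by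
      have c1 : ContinuousOn (fun t => xt s t) (Set.Icc (0:ℝ) T) :=
        hreg_xt.comp ((continuous_const.prodMk continuous_id).continuousOn)
          (fun t ht => Set.mk_mem_prod hs ht)
      have c2 : ContinuousOn (fun t => xt 1 t) (Set.Icc (0:ℝ) T) :=
        hreg_xt.comp ((continuous_const.prodMk continuous_id).continuousOn)
          (fun t ht => Set.mk_mem_prod h1I ht)
      exact c1.sub c2
    have hcR : ContinuousOn (fun t => ∫ r in (1:ℝ)..s, xts (Str19.pj 1 r) t)
        (Set.Icc (0:ℝ) T) := by
      have hglob : Continuous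
          (fun t => ∫ r in (1:ℝ)..s, xts (Str19.pj 1 r) (Str19.pj T t)) := by
        apply intervalIntegral.continuous_parametric_intervalIntegral_of_continuous'
          (μ := volume) (f := fun t r => xts (Str19.pj 1 r) (Str19.pj T t)) ?_ 1 s
        exact cXtsJ
      apply hglob.continuousOn.congr
      intro t ht
      have : Str19.pj T t = t := Str19.pj_eq ht
      simp only [this]
    intro t ht
    have hfin := Str19.eqOn_Icc_of_eqOn_Ioo hT hcL hcR hIoo_eq t ht
    have hx1 : xt 1 t = 0 := xt1 t ht
    rw [hx1, sub_zero] at hfin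
    exact hfin
  -- Schwarz: the s-derivative of xt is xts
  have hxtS : ∀ t ∈ Set.Icc (0:ℝ) T, ∀ s ∈ Set.Ioo (0:ℝ) 1,
      HasDerivAt (fun s' => xt s' t) (xts s t) s := by
    intro t ht s hs
    have hsI : s ∈ Set.Icc (0:ℝ) 1 := Set.Ioo_subset_Icc_self hs
    have hcXts : Continuous (fun r => xts (Str19.pj 1 r) t) :=
      hreg_xts.comp_continuous ((Str19.continuous_pj 1).prodMk continuous_const)
        (fun r => Set.mk_mem_prod (hpI r) ht)
    have hF : HasDerivAt (fun s' => ∫ r in (1:ℝ)..s', xts (Str19.pj 1 r) t)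
        (xts (Str19.pj 1 s) t) s :=
      intervalIntegral.integral_hasDerivAt_right (hcXts.intervalIntegrable _ _)
        (hcXts.stronglyMeasurableAtFilter _ _) hcXts.continuousAt
    rw [Str19.pj_eq hsI] at hF
    apply hF.congr_of_eventuallyEq
    filter_upwards [Icc_mem_nhds hs.1 hs.2] with z hz
    exact hxtrep z hz t ht
  -- Schwarz: the s-derivative of xt is xts
  -- continuity in `s` of clamped xtt
  have cXtt : ∀ t ∈ Set.Icc (0:ℝ) T, Continuous (fun y => xtt (Str19.pj 1 y) t) := by
    intro t ht
    have hrw : (fun y => xtt (Str19.pj 1 y) t)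
        = fun y => τs (Str19.pj 1 y) t • xs (Str19.pj 1 y) t
          + τ (Str19.pj 1 y) t • xss (Str19.pj 1 y) t := by
      funext y; rw [heq t ht (Str19.pj 1 y) (hpI y)]
    rw [hrw]
    have cXss_t : Continuous (fun y => xss (Str19.pj 1 y) t) :=
      hreg_xss.comp_continuous ((Str19.continuous_pj 1).prodMk continuous_const)
        (fun y => Set.mk_mem_prod (hpI y) ht)
    exact (((cτs t ht).comp_continuous (Str19.continuous_pj 1) hpI).smul
        ((cxs t ht).comp_continuous (Str19.continuous_pj 1) hpI)).add
      (((cτ t ht).comp_continuous (Str19.continuous_pj 1) hpI).smul cXss_t)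
  -- uniform bound for xtt
  have hMB : ∀ y : ℝ, ∀ t ∈ Set.Icc (0:ℝ) T,
      ‖xtt (Str19.pj 1 y) t‖ ≤ Mf ^ 2 * (1 + Mq ^ 2) + Mf ^ 2 * Mq := by
    intro y t ht
    rw [heq t ht _ (hpI y)]
    obtain ⟨hτ0, hτb, hτsb⟩ := key1 t ht _ (hpI y)
    have hxs1 : ‖xs (Str19.pj 1 y) t‖ = 1 := hconstr t ht _ (hpI y)
    have hxssb : ‖xss (Str19.pj 1 y) t‖ ≤ Mq := hMq (Str19.pj 1 y, t) ⟨hpI y, ht⟩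
    calc ‖τs (Str19.pj 1 y) t • xs (Str19.pj 1 y) t
          + τ (Str19.pj 1 y) t • xss (Str19.pj 1 y) t‖
        ≤ ‖τs (Str19.pj 1 y) t • xs (Str19.pj 1 y) t‖
          + ‖τ (Str19.pj 1 y) t • xss (Str19.pj 1 y) t‖ := norm_add_le _ _
      _ = |τs (Str19.pj 1 y) t| * ‖xs (Str19.pj 1 y) t‖
          + |τ (Str19.pj 1 y) t| * ‖xss (Str19.pj 1 y) t‖ := by
          rw [norm_smul, norm_smul, Real.norm_eq_abs, Real.norm_eq_abs]
      _ ≤ Mf ^ 2 * (1 + Mq ^ 2) + Mf ^ 2 * Mq := by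
          rw [hxs1, mul_one]
          have h1 : |τ (Str19.pj 1 y) t| = τ (Str19.pj 1 y) t := abs_of_nonneg hτ0
          have h2 : 0 ≤ ‖xss (Str19.pj 1 y) t‖ := norm_nonneg _
          nlinarith [abs_nonneg (τs (Str19.pj 1 y) t)]
  -- the spatial integral of ⟪xt, xtt⟫ vanishes
  have hE0 : ∀ t ∈ Set.Icc (0:ℝ) T,
      (∫ y in (0:ℝ)..1, (inner ℝ (xt (Str19.pj 1 y) t) (xtt (Str19.pj 1 y) t) : ℝ)) = 0 := by
    intro t ht
    have cXt_t : Continuous (fun y => xt (Str19.pj 1 y) t) :=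
      hreg_xt.comp_continuous ((Str19.continuous_pj 1).prodMk continuous_const)
        (fun y => Set.mk_mem_prod (hpI y) ht)
    set ψ : ℝ → ℝ :=
      fun y => inner ℝ (xt (Str19.pj 1 y) t) (τ (Str19.pj 1 y) t • xs (Str19.pj 1 y) t)
      with hψdef
    have hψc : Continuous ψ :=
      cXt_t.inner (((cτ t ht).comp_continuous (Str19.continuous_pj 1) hpI).smul
        ((cxs t ht).comp_continuous (Str19.continuous_pj 1) hpI))
    have hψd : ∀ y ∈ Set.Ioo (0:ℝ) 1, HasDerivWithinAt ψ
        ((inner ℝ (xt (Str19.pj 1 y) t) (xtt (Str19.pj 1 y) t) : ℝ)) (Set.Ioi y) y := by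
      intro y hy
      have hyI : y ∈ Set.Icc (0:ℝ) 1 := Set.Ioo_subset_Icc_self hy
      have hτxs : HasDerivAt (fun s' => τ s' t • xs s' t) (xtt y t) y := by
        have h' := ((hτs t ht y hyI).smul (hxss t ht y hyI)).hasDerivAt
          (Icc_mem_nhds hy.1 hy.2)
        rw [heq t ht y hyI]
        rw [show τs y t • xs y t + τ y t • xss y t
          = τ y t • xss y t + τs y t • xs y t from add_comm _ _]
        exact h'
      have hinner : HasDerivAt (fun s' => (inner ℝ (xt s' t) (τ s' t • xs s' t) : ℝ))
          ((inner ℝ (xt y t) (xtt y t) : ℝ) + inner ℝ (xts y t) (τ y t • xs y t)) y :=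
        (hxtS t ht y hy).inner ℝ hτxs
      have hz : (inner ℝ (xts y t) (τ y t • xs y t) : ℝ) = 0 := by
        rw [real_inner_smul_right, real_inner_comm, ip_ts y hyI t ht, mul_zero]
      rw [hz, add_zero] at hinner
      have hψloc : ψ =ᶠ[nhds y] (fun s' => (inner ℝ (xt s' t) (τ s' t • xs s' t) : ℝ)) := by
        filter_upwards [Icc_mem_nhds hy.1 hy.2] with z hz'
        simp only [hψdef, Str19.pj_eq hz']
      have hres := hinner.congr_of_eventuallyEq hψloc
      rw [show Str19.pj 1 y = y from Str19.pj_eq hyI]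
      exact hres.hasDerivWithinAt
    have hcInt : Continuous
        (fun y => (inner ℝ (xt (Str19.pj 1 y) t) (xtt (Str19.pj 1 y) t) : ℝ)) :=
      cXt_t.inner (cXtt t ht)
    have hFTC := intervalIntegral.integral_eq_sub_of_hasDeriv_right_of_le zero_le_one
      hψc.continuousOn hψd (hcInt.intervalIntegrable 0 1)
    rw [hFTC]
    have hψ1 : ψ 1 = 0 := by
      simp only [hψdef, Str19.pj_eq h1I, xt1 t ht]
      exact inner_zero_left _
    have hψ0 : ψ 0 = 0 := by
      simp only [hψdef, Str19.pj_eq h0I, (hbc t ht).2, zero_smul]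
      exact inner_zero_right _
    rw [hψ1, hψ0, sub_zero]
  -- the energy
  set Ef : ℝ → ℝ := fun t => ∫ y in (0:ℝ)..1, ‖xt (Str19.pj 1 y) (Str19.pj T t)‖ ^ 2
    with hEfdef
  have hEc : Continuous Ef := by
    apply intervalIntegral.continuous_parametric_intervalIntegral_of_continuous'
      (μ := volume) (f := fun t y => ‖xt (Str19.pj 1 y) (Str19.pj T t)‖ ^ 2) ?_ 0 1
    exact (cXtJ.norm).pow 2
  have hEd : ∀ t ∈ Set.Ioo (0:ℝ) T, HasDerivAt Ef 0 t := by
    intro t htI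
    have htJ : t ∈ Set.Icc (0:ℝ) T := Set.Ioo_subset_Icc_self htI
    have hε0 : 0 < min t (T - t) := lt_min htI.1 (sub_pos.mpr htI.2)
    have hball : Metric.ball t (min t (T - t)) ⊆ Set.Ioo 0 T := by
      intro z hz
      rw [Metric.mem_ball, Real.dist_eq, abs_lt] at hz
      constructor
      · have := min_le_left t (T - t); linarith
      · have := min_le_right t (T - t); linarith
    have cXt_t : Continuous (fun y => xt (Str19.pj 1 y) t) :=
      hreg_xt.comp_continuous ((Str19.continuous_pj 1).prodMk continuous_const)
        (fun y => Set.mk_mem_prod (hpI y) htJ)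
    have m1 : ∀ᶠ t' in nhds t, AEStronglyMeasurable
        (fun y => ‖xt (Str19.pj 1 y) (Str19.pj T t')‖ ^ 2)
        (volume.restrict (Set.uIoc 0 1)) :=
      Filter.Eventually.of_forall (fun t' =>
        (((cXt1 t').norm).pow 2).aestronglyMeasurable)
    have m2 : IntervalIntegrable
        (fun y => ‖xt (Str19.pj 1 y) (Str19.pj T t)‖ ^ 2) volume 0 1 :=
      (((cXt1 t).norm).pow 2).intervalIntegrable _ _
    have m3 : AEStronglyMeasurable
        (fun y => (inner ℝ (xt (Str19.pj 1 y) t) (xtt (Str19.pj 1 y) t) : ℝ)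
          + inner ℝ (xtt (Str19.pj 1 y) t) (xt (Str19.pj 1 y) t))
        (volume.restrict (Set.uIoc 0 1)) :=
      ((cXt_t.inner (cXtt t htJ)).add ((cXtt t htJ).inner cXt_t)).aestronglyMeasurable
    have m4 : ∀ᵐ y ∂volume, y ∈ Set.uIoc (0:ℝ) 1 →
        ∀ t' ∈ Metric.ball t (min t (T - t)),
          ‖(inner ℝ (xt (Str19.pj 1 y) t') (xtt (Str19.pj 1 y) t') : ℝ)
            + inner ℝ (xtt (Str19.pj 1 y) t') (xt (Str19.pj 1 y) t')‖
            ≤ 2 * (Mt * (Mf ^ 2 * (1 + Mq ^ 2) + Mf ^ 2 * Mq)) := by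
      apply Filter.Eventually.of_forall
      intro y _ t' ht'
      have ht'J : t' ∈ Set.Icc (0:ℝ) T := Set.Ioo_subset_Icc_self (hball ht')
      have hb1 : ‖xt (Str19.pj 1 y) t'‖ ≤ Mt := hMt (Str19.pj 1 y, t') ⟨hpI y, ht'J⟩
      have hb2 := hMB y t' ht'J
      have ha1 := abs_real_inner_le_norm (xt (Str19.pj 1 y) t') (xtt (Str19.pj 1 y) t')
      have ha2 := abs_real_inner_le_norm (xtt (Str19.pj 1 y) t') (xt (Str19.pj 1 y) t')
      rw [Real.norm_eq_abs]
      have htr := abs_add_le (inner ℝ (xt (Str19.pj 1 y) t') (xtt (Str19.pj 1 y) t') : ℝ)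
        (inner ℝ (xtt (Str19.pj 1 y) t') (xt (Str19.pj 1 y) t'))
      have hn1 : (0:ℝ) ≤ ‖xt (Str19.pj 1 y) t'‖ := norm_nonneg _
      have hn2 : (0:ℝ) ≤ ‖xtt (Str19.pj 1 y) t'‖ := norm_nonneg _
      nlinarith
    have m5 : IntervalIntegrable
        (fun _ : ℝ => 2 * (Mt * (Mf ^ 2 * (1 + Mq ^ 2) + Mf ^ 2 * Mq))) volume 0 1 :=
      intervalIntegrable_const
    have m6 : ∀ᵐ y ∂volume, y ∈ Set.uIoc (0:ℝ) 1 →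
        ∀ t' ∈ Metric.ball t (min t (T - t)),
          HasDerivAt (fun z => ‖xt (Str19.pj 1 y) (Str19.pj T z)‖ ^ 2)
            ((inner ℝ (xt (Str19.pj 1 y) t') (xtt (Str19.pj 1 y) t') : ℝ)
              + inner ℝ (xtt (Str19.pj 1 y) t') (xt (Str19.pj 1 y) t')) t' := by
      apply Filter.Eventually.of_forall
      intro y _ t' ht'
      have ht'I : t' ∈ Set.Ioo (0:ℝ) T := hball ht'
      have ht'J : t' ∈ Set.Icc (0:ℝ) T := Set.Ioo_subset_Icc_self ht'I
      have base : HasDerivAt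
          (fun z => (inner ℝ (xt (Str19.pj 1 y) z) (xt (Str19.pj 1 y) z) : ℝ))
          ((inner ℝ (xt (Str19.pj 1 y) t') (xtt (Str19.pj 1 y) t') : ℝ)
            + inner ℝ (xtt (Str19.pj 1 y) t') (xt (Str19.pj 1 y) t')) t' :=
        ((hxtt (Str19.pj 1 y) (hpI y) t' ht'J).hasDerivAt
            (Icc_mem_nhds ht'I.1 ht'I.2)).inner ℝ
          ((hxtt (Str19.pj 1 y) (hpI y) t' ht'J).hasDerivAt
            (Icc_mem_nhds ht'I.1 ht'I.2))
      simp only [real_inner_self_eq_norm_sq] at base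
      apply base.congr_of_eventuallyEq
      filter_upwards [Ioo_mem_nhds ht'I.1 ht'I.2] with z hz
      rw [Str19.pj_eq (Set.Ioo_subset_Icc_self hz)]
    have hmain := (intervalIntegral.hasDerivAt_integral_of_dominated_loc_of_deriv_le
        (𝕜 := ℝ) (μ := volume)
        (F := fun t' y => ‖xt (Str19.pj 1 y) (Str19.pj T t')‖ ^ 2)
        (F' := fun t' y => (inner ℝ (xt (Str19.pj 1 y) t') (xtt (Str19.pj 1 y) t') : ℝ)
          + inner ℝ (xtt (Str19.pj 1 y) t') (xt (Str19.pj 1 y) t'))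
        (bound := fun _ => 2 * (Mt * (Mf ^ 2 * (1 + Mq ^ 2) + Mf ^ 2 * Mq)))
        (a := 0) (b := 1) (x₀ := t) (Metric.ball_mem_nhds t hε0) m1 m2 m3 m4 m5 m6).2
    have hzero : (∫ y in (0:ℝ)..1,
        ((inner ℝ (xt (Str19.pj 1 y) t) (xtt (Str19.pj 1 y) t) : ℝ)
          + inner ℝ (xtt (Str19.pj 1 y) t) (xt (Str19.pj 1 y) t))) = 0 := by
      have hcongr : (∫ y in (0:ℝ)..1,
          ((inner ℝ (xt (Str19.pj 1 y) t) (xtt (Str19.pj 1 y) t) : ℝ)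
            + inner ℝ (xtt (Str19.pj 1 y) t) (xt (Str19.pj 1 y) t)))
          = ∫ y in (0:ℝ)..1,
            2 * (inner ℝ (xt (Str19.pj 1 y) t) (xtt (Str19.pj 1 y) t) : ℝ) := by
        apply intervalIntegral.integral_congr
        intro y _
        show (inner ℝ (xt (Str19.pj 1 y) t) (xtt (Str19.pj 1 y) t) : ℝ)
            + inner ℝ (xtt (Str19.pj 1 y) t) (xt (Str19.pj 1 y) t)
          = 2 * (inner ℝ (xt (Str19.pj 1 y) t) (xtt (Str19.pj 1 y) t) : ℝ)
        rw [real_inner_comm (xtt (Str19.pj 1 y) t) (xt (Str19.pj 1 y) t)]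
        ring
      rw [hcongr, intervalIntegral.integral_const_mul, hE0 t htJ, mul_zero]
    rw [hzero] at hmain
    exact hmain
  -- the energy is constant
  have hEconst : ∀ t ∈ Set.Icc (0:ℝ) T, Ef t = Ef T := by
    have hIoo : ∀ a ∈ Set.Ioo (0:ℝ) T, Ef a = Ef T := by
      intro a haI
      have hconst := constant_of_has_deriv_right_zero (f := Ef) (a := a) (b := T)
        (hEc.continuousOn) (fun z hz => by
          have hzI : z ∈ Set.Ioo (0:ℝ) T := ⟨lt_of_lt_of_le haI.1 hz.1, hz.2⟩
          exact (hEd z hzI).hasDerivWithinAt)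
      exact (hconst T (Set.right_mem_Icc.mpr haI.2.le)).symm
    exact Str19.eqOn_Icc_of_eqOn_Ioo hT hEc.continuousOn continuousOn_const hIoo
  -- the energy vanishes at t₀
  have hXzero : ∀ r ∈ Set.Icc (0:ℝ) 1, xts (Str19.pj 1 r) t₀ = 0 := by
    have hc : Continuous (fun r => xts (Str19.pj 1 r) t₀) :=
      hreg_xts.comp_continuous ((Str19.continuous_pj 1).prodMk continuous_const)
        (fun r => Set.mk_mem_prod (hpI r) ht₀J)
    apply Str19.eqOn_Icc_of_eqOn_Ioo one_pos hc.continuousOn continuousOn_const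
    intro r hr
    rw [Str19.pj_eq (Set.Ioo_subset_Icc_self hr)]
    exact hxts_t₀ r hr
  have hxt_t₀ : ∀ s ∈ Set.Icc (0:ℝ) 1, xt s t₀ = 0 := by
    intro s hs
    rw [hxtrep s hs t₀ ht₀J]
    have heqz : Set.EqOn (fun r => xts (Str19.pj 1 r) t₀)
        (fun _ => (0 : EuclideanSpace ℝ (Fin 3))) (Set.uIcc 1 s) := by
      intro r hr
      rw [Set.uIcc_of_ge hs.2] at hr
      exact hXzero r ⟨le_trans hs.1 hr.1, hr.2⟩
    rw [intervalIntegral.integral_congr heqz, intervalIntegral.integral_zero]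
  have hEft₀ : Ef t₀ = 0 := by
    have hc : Ef t₀ = ∫ y in (0:ℝ)..1, (0:ℝ) := by
      apply intervalIntegral.integral_congr
      intro y _
      show ‖xt (Str19.pj 1 y) (Str19.pj T t₀)‖ ^ 2 = 0
      rw [Str19.pj_eq ht₀J, hxt_t₀ (Str19.pj 1 y) (hpI y)]
      simp
    rw [hc, intervalIntegral.integral_zero]
  have hET : Ef T = 0 := by rw [← hEconst t₀ ht₀J]; exact hEft₀
  have hxt_all : ∀ s ∈ Set.Icc (0:ℝ) 1, ∀ t ∈ Set.Icc (0:ℝ) T, xt s t = 0 := by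
    intro s hs t ht
    have hEt : Ef t = 0 := (hEconst t ht).trans hET
    have hzero := Str19.zero_of_integral_zero
      (f := fun y => ‖xt (Str19.pj 1 y) (Str19.pj T t)‖ ^ 2)
      (((cXt1 t).norm).pow 2) (fun y _ => sq_nonneg _) hEt
    have h2 : ‖xt (Str19.pj 1 s) (Str19.pj T t)‖ ^ 2 = 0 := hzero s hs
    rw [Str19.pj_eq hs, Str19.pj_eq ht] at h2
    exact norm_eq_zero.mp (sq_eq_zero_iff.mp h2)
  -- conclusion
  have hx_const : ∀ s ∈ Set.Icc (0:ℝ) 1, ∀ t ∈ Set.Icc (0:ℝ) T, x s t = x s 0 := by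
    intro s hs t ht
    have hcont : ContinuousOn (fun t' => x s t') (Set.Icc 0 T) :=
      fun t' ht' => (hxt s hs t' ht').continuousWithinAt
    have hderiv : ∀ z ∈ Set.Ico (0:ℝ) T,
        HasDerivWithinAt (fun t' => x s t') 0 (Set.Ici z) z := by
      intro z hz
      have hzJ : z ∈ Set.Icc (0:ℝ) T := ⟨hz.1, hz.2.le⟩
      have h1 : HasDerivWithinAt (fun t' => x s t') (xt s z) (Set.Icc z T) z :=
        (hxt s hs z hzJ).mono (Set.Icc_subset_Icc hz.1 le_rfl)
      rw [hxt_all s hs z hzJ] at h1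
      exact h1.mono_of_mem_nhdsWithin (Icc_mem_nhdsGE_of_mem ⟨le_refl z, hz.2⟩)
    exact constant_of_has_deriv_right_zero hcont hderiv t ht
  -- xts vanishes identically, hence τ ≡ 0
  have hτ_all : ∀ t ∈ Set.Icc (0:ℝ) T, ∀ s ∈ Set.Icc (0:ℝ) 1, τ s t = 0 := by
    intro t ht
    have hxts0 : ∀ r ∈ Set.Ioo (0:ℝ) 1, xts r t = 0 := by
      intro r hr
      have h1 : HasDerivAt (fun s' => xt s' t) (xts r t) r := hxtS t ht r hr
      have h2 : HasDerivAt (fun _ : ℝ => (0 : EuclideanSpace ℝ (Fin 3))) (xts r t) r := by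
        apply h1.congr_of_eventuallyEq
        filter_upwards [Icc_mem_nhds hr.1 hr.2] with z hz
        exact (hxt_all z hz t ht).symm
      exact (h2.unique (hasDerivAt_const r 0))
    have hfF00 : ∀ y ∈ Set.Icc (0:ℝ) 1, fF t y = 0 := by
      have hX : ∀ y ∈ Set.Icc (0:ℝ) 1, xts (Str19.pj 1 y) (Str19.pj T t) = 0 := by
        have hc : Continuous (fun r => xts (Str19.pj 1 r) (Str19.pj T t)) :=
          hreg_xts.comp_continuous ((Str19.continuous_pj 1).prodMk continuous_const)
            (fun r => Set.mk_mem_prod (hpI r) (hpT t))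
        apply Str19.eqOn_Icc_of_eqOn_Ioo one_pos hc.continuousOn continuousOn_const
        intro y hy
        rw [Str19.pj_eq (Set.Ioo_subset_Icc_self hy), Str19.pj_eq ht]
        exact hxts0 y hy
      intro y hy
      show ‖xts (Str19.pj 1 y) (Str19.pj T t)‖ ^ 2 = 0
      rw [hX y hy]
      simp
    have hzero := Str19.bvp_zero (cuF t ht) (cuF' t ht) (cqF t) (cfF t)
      (duF t ht) (duF' t ht) (hqF0 t) (hfF0 t) (huF0 t ht) (huF'1 t ht) hfF00
    intro s hs
    have h2 := hzero s hs
    simpa [huFdef, Str19.pj_eq hs] using h2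
  intro s hs t ht
  exact ⟨hxt_all s hs t ht, hx_const s hs t ht, hτ_all t ht s hs⟩
end
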